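/- arXiv:2310.07483 — 5 statements merged into one kernel-verified Lean document; each statement's English description precedes it below -/
import Mathlib

section
/- Let s ∈ (1,2], C ≥ 1 and ε₀ ≥ 0. Suppose given E : [0,s] × [1,∞) → [0,∞) with u ↦ E(p,u) measurable for each p, and B, F : [0,s] × {(u₁,u₂) : 1 ≤ u₁ ≤ u₂} → [0,∞), such that: (i) for every p ∈ [1,s] and 1 ≤ u₁ ≤ u₂, B(p,u₁,u₂) ≥ ∫_{u₁}^{u₂} E(p−1,u) du; (ii) for all p₁, p₂ ∈ [0,s], θ ∈ [0,1] and u ≥ 1, E(θp₁+(1−θ)p₂, u) ≤ E(p₁,u)^θ · E(p₂,u)^{1−θ}; (iii) for every p ∈ [0,s] and all 1 ≤ u₁ ≤ u₂, p·B(p,u₁,u₂) + sup_{u∈[u₁,u₂]} E(p,u) + F(p,u₁,u₂) ≤ C·(E(p,u₁) + ε₀²·u₁^{p−s}); (iv) E(p,1) ≤ C·ε₀² for every p ∈ [0,s]. Then there exists a constant C′ depending only on s and C such that for all p ∈ [0,s] and all 1 ≤ u₁ ≤ u₂, sup_{u∈[u₁,u₂]} E(p,u) + F(p,u₁,u₂)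 ≤ C′·ε₀²·u₁^{p−s}. -/
open MeasureTheory


private lemma mean_value_aux {f : ℝ → ℝ} (hf : Measurable f) {a b M : ℝ}
    (hab : a < b) (hM : 0 < M)
    (hI : ∫⁻ u in Set.Icc a b, ENNReal.ofReal (f u) ≤ ENNReal.ofReal M) :
    ∃ u ∈ Set.Icc a b, f u ≤ 2 * M / (b - a) := by
  by_contra hcon
  push_neg at hcon
  have hba : 0 < b - a := by linarith
  have h1 : ENNReal.ofReal (2*M/(b-a)) * volume (Set.Icc a b)
      ≤ ∫⁻ u in Set.Icc a b, ENNReal.ofReal (f u) := by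
    rw [← MeasureTheory.setLIntegral_const]
    exact MeasureTheory.setLIntegral_mono hf.ennreal_ofReal
      (fun x hx => ENNReal.ofReal_le_ofReal (hcon x hx).le)
  rw [Real.volume_Icc, ← ENNReal.ofReal_mul (by positivity), div_mul_cancel₀ _ hba.ne'] at h1
  have h2 := le_trans h1 hI
  rw [ENNReal.ofReal_le_ofReal_iff hM.le] at h2
  linarith

set_option maxHeartbeats 2000000 in
/-- Abstract dyadic "mean value" lemma for `r^p`-weighted estimates in the interior
region. Given `s ∈ (1,2]`, `C ≥ 1`, `ε₀ ≥ 0`, nonnegative quantities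
`E(p,u)`, `B(p,u₁,u₂)`, `F(p,u₁,u₂)` (for `p ∈ [0,s]`, `1 ≤ u₁ ≤ u₂`) such that:
(i) `B(p,u₁,u₂) ≥ ∫_{u₁}^{u₂} E(p−1,u) du` for `p ∈ [1,s]`;
(ii) `E` is log-convex in `p`: `E(θp₁+(1−θ)p₂,u) ≤ E(p₁,u)^θ E(p₂,u)^{1−θ}`;
(iii) `p·B(p,u₁,u₂) + sup_{u∈[u₁,u₂]} E(p,u) + F(p,u₁,u₂) ≤ C(E(p,u₁) + ε₀² u₁^{p−s})`;
(iv) `E(p,1) ≤ C ε₀²`;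
then there is `C'` depending only on `s` and `C` with
`sup_{u∈[u₁,u₂]} E(p,u) + F(p,u₁,u₂) ≤ C' ε₀² u₁^{p−s}` for all `p ∈ [0,s]`,
`1 ≤ u₁ ≤ u₂`. (The suprema are expressed by quantifying over `u ∈ [u₁,u₂]`.) -/
theorem dyadic_mean_value_lemma (s C : ℝ) (hs1 : 1 < s) (hs2 : s ≤ 2) (hC : 1 ≤ C) :
    ∃ C' : ℝ, 0 < C' ∧
      ∀ (ε₀ : ℝ), 0 ≤ ε₀ →
      ∀ (E : ℝ → ℝ → ℝ) (B F : ℝ → ℝ → ℝ → ℝ),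
      (∀ p ∈ Set.Icc (0:ℝ) s, ∀ u, 1 ≤ u → 0 ≤ E p u) →
      (∀ p ∈ Set.Icc (0:ℝ) s, Measurable (fun u => E p u)) →
      (∀ p ∈ Set.Icc (0:ℝ) s, ∀ u₁ u₂, 1 ≤ u₁ → u₁ ≤ u₂ →
        0 ≤ B p u₁ u₂ ∧ 0 ≤ F p u₁ u₂) →
      -- (i) the bulk dominates the integral of the lower-weight energy
      (∀ p ∈ Set.Icc (1:ℝ) s, ∀ u₁ u₂, 1 ≤ u₁ → u₁ ≤ u₂ →
        ∫⁻ u in Set.Icc u₁ u₂, ENNReal.ofReal (E (p - 1) u)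
          ≤ ENNReal.ofReal (B p u₁ u₂)) →
      -- (ii) interpolation (log-convexity in p)
      (∀ p₁ ∈ Set.Icc (0:ℝ) s, ∀ p₂ ∈ Set.Icc (0:ℝ) s, ∀ θ ∈ Set.Icc (0:ℝ) 1,
        ∀ u, 1 ≤ u →
          E (θ * p₁ + (1 - θ) * p₂) u ≤ E p₁ u ^ θ * E p₂ u ^ (1 - θ)) →
      -- (iii) the r^p-weighted energy inequality
      (∀ p ∈ Set.Icc (0:ℝ) s, ∀ u₁ u₂, 1 ≤ u₁ → u₁ ≤ u₂ →
        ∀ u ∈ Set.Icc u₁ u₂,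
          p * B p u₁ u₂ + E p u + F p u₁ u₂
            ≤ C * (E p u₁ + ε₀ ^ 2 * u₁ ^ (p - s))) →
      -- (iv) initial smallness
      (∀ p ∈ Set.Icc (0:ℝ) s, E p 1 ≤ C * ε₀ ^ 2) →
      -- conclusion
      ∀ p ∈ Set.Icc (0:ℝ) s, ∀ u₁ u₂, 1 ≤ u₁ → u₁ ≤ u₂ →
        ∀ u ∈ Set.Icc u₁ u₂,
          E p u + F p u₁ u₂ ≤ C' * ε₀ ^ 2 * u₁ ^ (p - s) := by
  have hC0 : (0:ℝ) < C := lt_of_lt_of_le one_pos hC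
  have hs0 : (0:ℝ) < s := by linarith
  obtain ⟨K₀, hK₀def⟩ : ∃ x:ℝ, x = 2*C^2 := ⟨_, rfl⟩
  obtain ⟨K₁, hK₁def⟩ : ∃ x:ℝ, x = max (2*K₀) (C*(4*C*(K₀+1)+2)) := ⟨_, rfl⟩
  obtain ⟨K, hKdef⟩ : ∃ x:ℝ, x = max K₀ K₁ := ⟨_, rfl⟩
  obtain ⟨K₂, hK₂def⟩ : ∃ x:ℝ, x = max (4*K₀) (4*C*(2*C*(K+1)+1)) := ⟨_, rfl⟩
  obtain ⟨K', hK'def⟩ : ∃ x:ℝ, x = max K₀ K₂ := ⟨_, rfl⟩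
  have hK₀pos : 0 < K₀ := by rw [hK₀def]; positivity
  have hK₁a : 2*K₀ ≤ K₁ := hK₁def ▸ le_max_left _ _
  have hK₁b : C*(4*C*(K₀+1)+2) ≤ K₁ := hK₁def ▸ le_max_right _ _
  have hK₁pos : 0 < K₁ := lt_of_lt_of_le (by positivity) hK₁a
  have hKa : K₀ ≤ K := hKdef ▸ le_max_left _ _
  have hKb : K₁ ≤ K := hKdef ▸ le_max_right _ _
  have hKpos : 0 < K := lt_of_lt_of_le hK₀pos hKa
  have hK₂a : 4*K₀ ≤ K₂ := hK₂def ▸ le_max_left _ _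
  have hK₂b : 4*C*(2*C*(K+1)+1) ≤ K₂ := hK₂def ▸ le_max_right _ _
  have hK₂pos : 0 < K₂ := lt_of_lt_of_le (by positivity) hK₂a
  have hK'a : K₀ ≤ K' := hK'def ▸ le_max_left _ _
  have hK'b : K₂ ≤ K' := hK'def ▸ le_max_right _ _
  have hK'pos : 0 < K' := lt_of_lt_of_le hK₀pos hK'a
  refine ⟨C*(K'+1), by positivity, ?_⟩
  intro ε₀ hε₀ E B F hEnn hEmeas hBF hi hii hiii hiv
  have hε2 : (0:ℝ) ≤ ε₀^2 := sq_nonneg _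
  have hsmem : s ∈ Set.Icc (0:ℝ) s := ⟨hs0.le, le_rfl⟩
  have hs1mem : (s-1) ∈ Set.Icc (0:ℝ) s := ⟨by linarith, by linarith⟩
  have h1mem : (1:ℝ) ∈ Set.Icc (0:ℝ) s := ⟨zero_le_one, hs1.le⟩
  have h0mem : (0:ℝ) ∈ Set.Icc (0:ℝ) s := ⟨le_rfl, hs0.le⟩
  -- uniform bound
  have hUnif : ∀ p ∈ Set.Icc (0:ℝ) s, ∀ u, 1 ≤ u → E p u ≤ K₀ * ε₀^2 := by
    intro p hp u hu
    have h3 := hiii p hp 1 u le_rfl hu u ⟨hu, le_rfl⟩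
    have h4 := hiv p hp
    obtain ⟨hBn, hFn⟩ := hBF p hp 1 u le_rfl hu
    rw [Real.one_rpow] at h3
    have hpB : 0 ≤ p * B p 1 u := mul_nonneg hp.1 hBn
    have h5 : C * E p 1 ≤ C * (C * ε₀^2) := by nlinarith
    nlinarith [sq_nonneg (C-1), mul_nonneg (mul_nonneg hε2 hC0.le) (sub_nonneg.2 hC)]
  rcases eq_or_lt_of_le hε₀ with hz | hεpos
  · -- ε₀ = 0
    intro p hp u₁ u₂ hu₁ h12 u hu
    have hε20 : ε₀^2 = 0 := by rw [← hz]; ring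
    have h3 := hiii p hp u₁ u₂ hu₁ h12 u hu
    have hE1 := hUnif p hp u₁ hu₁
    have hE1' := hEnn p hp u₁ hu₁
    obtain ⟨hBn, hFn⟩ := hBF p hp u₁ u₂ hu₁ h12
    have hpB : 0 ≤ p * B p u₁ u₂ := mul_nonneg hp.1 hBn
    rw [hε20] at h3 hE1 ⊢
    have : E p u + F p u₁ u₂ ≤ 0 := by nlinarith
    nlinarith
  have hε2pos : (0:ℝ) < ε₀^2 := by positivity
  -- Step A : decay for p = s-1
  have hDs1 : ∀ u, 1 ≤ u → E (s-1) u ≤ K₁ * ε₀^2 * u ^ (-1:ℝ) := by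
    intro u hu
    have hu0 : (0:ℝ) < u := by linarith
    rcases le_or_gt u 2 with h2 | h2
    · have hinv : (1:ℝ)/2 ≤ u ^ (-1:ℝ) := by
        rw [Real.rpow_neg_one, show (1:ℝ)/2 = 2⁻¹ by norm_num]
        exact inv_anti₀ hu0 h2
      have hE := hUnif (s-1) hs1mem u hu
      have h6 : 2*K₀ * ε₀^2 * (1/2) ≤ K₁ * ε₀^2 * u ^ (-1:ℝ) := by
        gcongr
      nlinarith
    · have hhalf : (1:ℝ) ≤ u/2 := by linarith
      have hpos2 : (0:ℝ) < u/2 := by linarith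
      have hmono := hi s ⟨hs1.le, le_rfl⟩ (u/2) u hhalf (by linarith)
      have h3 := hiii s hsmem (u/2) u hhalf (by linarith) (u/2) ⟨le_rfl, by linarith⟩
      rw [sub_self, Real.rpow_zero] at h3
      have hEb := hUnif s hsmem (u/2) hhalf
      obtain ⟨hBn, hFn⟩ := hBF s hsmem (u/2) u hhalf (by linarith)
      have hEn2 := hEnn s hsmem (u/2) hhalf
      have h7 : C * E s (u/2) ≤ C * (K₀ * ε₀^2) := by gcongr
      have h8 : B s (u/2) u ≤ s * B s (u/2) u := le_mul_of_one_le_left hBn hs1.le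
      have hBle : B s (u/2) u ≤ C*(K₀+1)*ε₀^2 := by nlinarith [h3, h7, h8]
      have hM : (0:ℝ) < C*(K₀+1)*ε₀^2 := by positivity
      obtain ⟨w, hw, hwle⟩ := mean_value_aux (hEmeas (s-1) hs1mem)
        (by linarith : u/2 < u) hM (le_trans hmono (ENNReal.ofReal_le_ofReal hBle))
      have hw1 : (1:ℝ) ≤ w := le_trans hhalf hw.1
      have hwle' : E (s-1) w ≤ 4*(C*(K₀+1)*ε₀^2)/u := by
        have : u - u/2 = u/2 := by ring
        rw [this] at hwle
        calc E (s-1) w ≤ 2*(C*(K₀+1)*ε₀^2)/(u/2) := hwle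
          _ = 4*(C*(K₀+1)*ε₀^2)/u := by field_simp; ring
      have h3' := hiii (s-1) hs1mem w u hw1 hw.2 u ⟨hw.2, le_rfl⟩
      obtain ⟨hBn', hFn'⟩ := hBF (s-1) hs1mem w u hw1 hw.2
      have hpB' : 0 ≤ (s-1) * B (s-1) w u := mul_nonneg (by linarith) hBn'
      have hwexp : w ^ (s-1-s : ℝ) ≤ 2/u := by
        rw [show (s-1-s:ℝ) = -1 by ring, Real.rpow_neg_one]
        calc w⁻¹ ≤ (u/2)⁻¹ := inv_anti₀ hpos2 hw.1
          _ = 2/u := by field_simp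
      have hstep : E (s-1) u ≤ C * (E (s-1) w + ε₀^2 * w ^ (s-1-s:ℝ)) := by linarith
      calc E (s-1) u ≤ C * (4*(C*(K₀+1)*ε₀^2)/u + ε₀^2 * (2/u)) := by
            refine le_trans hstep ?_
            gcongr
          _ = (C*(4*C*(K₀+1)+2)) * ε₀^2 / u := by field_simp
          _ ≤ K₁ * ε₀^2 / u := by gcongr
          _ = K₁ * ε₀^2 * u ^ (-1:ℝ) := by rw [Real.rpow_neg_one]; ring
  -- Step B : decay for p = 1 via interpolation
  have hD1 : ∀ u, 1 ≤ u → E 1 u ≤ K * ε₀^2 * u ^ (1-s:ℝ) := by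
    intro u hu
    have hu0 : (0:ℝ) < u := by linarith
    have hθ : (s-1) ∈ Set.Icc (0:ℝ) 1 := ⟨by linarith, by linarith⟩
    have h2 := hii (s-1) hs1mem s hsmem (s-1) hθ u hu
    rw [show (s-1)*(s-1) + (1-(s-1))*s = 1 by ring] at h2
    have hKe : (0:ℝ) < K * ε₀^2 := by positivity
    have hA : E (s-1) u ^ (s-1:ℝ) ≤ (K*ε₀^2*u^(-1:ℝ)) ^ (s-1:ℝ) := by
      apply Real.rpow_le_rpow (hEnn _ hs1mem u hu) _ (by linarith)
      refine le_trans (hDs1 u hu) ?_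
      gcongr
    have hB2 : E s u ^ (1-(s-1):ℝ) ≤ (K*ε₀^2) ^ (1-(s-1):ℝ) := by
      apply Real.rpow_le_rpow (hEnn _ hsmem u hu) _ (by linarith)
      refine le_trans (hUnif s hsmem u hu) ?_
      gcongr
    have hprod : E 1 u ≤ (K*ε₀^2*u^(-1:ℝ)) ^ (s-1:ℝ) * (K*ε₀^2) ^ (1-(s-1):ℝ) :=
      le_trans h2 (mul_le_mul hA hB2 (Real.rpow_nonneg (hEnn _ hsmem u hu) _)
        (Real.rpow_nonneg (by positivity) _))
    calc E 1 u ≤ (K*ε₀^2*u^(-1:ℝ)) ^ (s-1:ℝ) * (K*ε₀^2) ^ (1-(s-1):ℝ) := hprod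
      _ = (K*ε₀^2) ^ (s-1:ℝ) * (K*ε₀^2) ^ (1-(s-1):ℝ) * (u^(-1:ℝ)) ^ (s-1:ℝ) := by
          rw [Real.mul_rpow hKe.le (Real.rpow_nonneg hu0.le _)]; ring
      _ = (K*ε₀^2) * u ^ (1-s:ℝ) := by
          rw [← Real.rpow_add hKe, show (s-1) + (1-(s-1)) = (1:ℝ) by ring, Real.rpow_one,
            ← Real.rpow_mul hu0.le, show (-1)*(s-1) = (1-s:ℝ) by ring]
      _ = K * ε₀^2 * u ^ (1-s:ℝ) := by ring
  -- Step C : decay for p = 0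
  have hpow2 : (2:ℝ)^(s:ℝ) ≤ 4 := by
    have h := Real.rpow_le_rpow_of_exponent_le (by norm_num : (1:ℝ) ≤ 2) hs2
    rwa [show (2:ℝ)^(2:ℝ) = 4 by
      rw [show (2:ℝ) = ((2:ℕ):ℝ) by norm_num, Real.rpow_natCast]; norm_num] at h
  have hD0 : ∀ u, 1 ≤ u → E 0 u ≤ K₂ * ε₀^2 * u ^ (-s:ℝ) := by
    intro u hu
    have hu0 : (0:ℝ) < u := by linarith
    rcases le_or_gt u 2 with h2 | h2
    · have hus : u ^ (s:ℝ) ≤ 4 :=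
        le_trans (Real.rpow_le_rpow hu0.le h2 hs0.le) hpow2
      have hinv : (1:ℝ)/4 ≤ u ^ (-s:ℝ) := by
        rw [Real.rpow_neg hu0.le, show (1:ℝ)/4 = 4⁻¹ by norm_num]
        exact inv_anti₀ (by positivity) hus
      have hE := hUnif 0 h0mem u hu
      have h6 : 4*K₀ * ε₀^2 * (1/4) ≤ K₂ * ε₀^2 * u ^ (-s:ℝ) := by gcongr
      nlinarith
    · have hhalf : (1:ℝ) ≤ u/2 := by linarith
      have hpos2 : (0:ℝ) < u/2 := by linarith
      have hmono := hi 1 ⟨le_rfl, hs1.le⟩ (u/2) u hhalf (by linarith)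
      rw [sub_self] at hmono
      have h3 := hiii 1 h1mem (u/2) u hhalf (by linarith) (u/2) ⟨le_rfl, by linarith⟩
      rw [one_mul] at h3
      have hEb := hD1 (u/2) hhalf
      obtain ⟨hBn, hFn⟩ := hBF 1 h1mem (u/2) u hhalf (by linarith)
      have hEn2 := hEnn 1 h1mem (u/2) hhalf
      have h7 : C * E 1 (u/2) ≤ C * (K * ε₀^2 * (u/2) ^ (1-s:ℝ)) := by gcongr
      have hxpos : (0:ℝ) < (u/2) ^ (1-s:ℝ) := by positivity
      have hBle : B 1 (u/2) u ≤ C*(K+1)*ε₀^2*(u/2)^(1-s:ℝ) := by nlinarith [h3, h7]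
      have hM : (0:ℝ) < C*(K+1)*ε₀^2*(u/2)^(1-s:ℝ) := by positivity
      obtain ⟨w, hw, hwle⟩ := mean_value_aux (hEmeas 0 h0mem)
        (by linarith : u/2 < u) hM (le_trans hmono (ENNReal.ofReal_le_ofReal hBle))
      have hw1 : (1:ℝ) ≤ w := le_trans hhalf hw.1
      have hdiv : (u/2)^(1-s:ℝ) / (u/2) = (u/2)^(-s:ℝ) := by
        have := Real.rpow_sub hpos2 (1-s) 1
        rw [Real.rpow_one] at this
        rw [← this, show (1-s-1:ℝ) = -s by ring]
      have hwle' : E 0 w ≤ 2*C*(K+1)*ε₀^2*(u/2)^(-s:ℝ) := by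
        have he : u - u/2 = u/2 := by ring
        rw [he] at hwle
        calc E 0 w ≤ 2*(C*(K+1)*ε₀^2*(u/2)^(1-s:ℝ))/(u/2) := hwle
          _ = 2*C*(K+1)*ε₀^2*((u/2)^(1-s:ℝ)/(u/2)) := by ring
          _ = 2*C*(K+1)*ε₀^2*(u/2)^(-s:ℝ) := by rw [hdiv]
      have h3' := hiii 0 h0mem w u hw1 hw.2 u ⟨hw.2, le_rfl⟩
      rw [zero_mul, zero_sub] at h3'
      obtain ⟨hBn', hFn'⟩ := hBF 0 h0mem w u hw1 hw.2
      have hwexp : w ^ (-s:ℝ) ≤ (u/2) ^ (-s:ℝ) :=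
        Real.rpow_le_rpow_of_nonpos hpos2 hw.1 (by linarith)
      have hstep0 : E 0 u ≤ C * (E 0 w + ε₀^2 * w ^ (-s:ℝ)) := by linarith
      have hq : (u/2:ℝ)^(-s:ℝ) ≤ u^(-s:ℝ) * 4 := by
        have : (u/2:ℝ)^(-s:ℝ) = u^(-s:ℝ) * (2:ℝ)^(s:ℝ) := by
          rw [Real.div_rpow hu0.le (by norm_num : (0:ℝ) ≤ (2:ℝ)), div_eq_mul_inv,
            Real.rpow_neg (by norm_num : (0:ℝ) ≤ (2:ℝ)), inv_inv]
        rw [this]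
        gcongr
      have hx2 : (0:ℝ) < (u/2) ^ (-s:ℝ) := by positivity
      calc E 0 u ≤ C * (2*C*(K+1)*ε₀^2*(u/2)^(-s:ℝ) + ε₀^2 * (u/2)^(-s:ℝ)) :=
            le_trans hstep0 (by gcongr)
        _ = C*(2*C*(K+1)+1)*ε₀^2*((u/2)^(-s:ℝ)) := by ring
        _ ≤ C*(2*C*(K+1)+1)*ε₀^2*(u^(-s:ℝ)*4) := by gcongr
        _ = 4*C*(2*C*(K+1)+1)*ε₀^2*u^(-s:ℝ) := by ring
        _ ≤ K₂*ε₀^2*u^(-s:ℝ) := by gcongr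
  -- Step D : decay for all p via interpolation
  have hDp : ∀ p ∈ Set.Icc (0:ℝ) s, ∀ u, 1 ≤ u → E p u ≤ K' * ε₀^2 * u ^ (p-s:ℝ) := by
    intro p hp u hu
    have hu0 : (0:ℝ) < u := by linarith
    have hθ : p/s ∈ Set.Icc (0:ℝ) 1 := ⟨div_nonneg hp.1 hs0.le, (div_le_one hs0).2 hp.2⟩
    have h2 := hii s hsmem 0 h0mem (p/s) hθ u hu
    rw [show p/s*s + (1-p/s)*0 = p by field_simp; ring] at h2
    have hKe : (0:ℝ) < K'*ε₀^2 := by positivity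
    have hA : E s u ^ (p/s) ≤ (K'*ε₀^2) ^ (p/s) :=
      Real.rpow_le_rpow (hEnn _ hsmem u hu) (le_trans (hUnif s hsmem u hu) (by gcongr)) hθ.1
    have hB2 : E 0 u ^ (1-p/s) ≤ (K'*ε₀^2 * u^(-s:ℝ)) ^ (1-p/s) := by
      refine Real.rpow_le_rpow (hEnn _ h0mem u hu) ?_ (by linarith [hθ.2])
      refine le_trans (hD0 u hu) ?_
      gcongr
    calc E p u ≤ (K'*ε₀^2) ^ (p/s) * (K'*ε₀^2 * u^(-s:ℝ)) ^ (1-p/s) :=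
          le_trans h2 (mul_le_mul hA hB2 (Real.rpow_nonneg (hEnn _ h0mem u hu) _)
            (Real.rpow_nonneg hKe.le _))
      _ = (K'*ε₀^2) ^ (p/s) * ((K'*ε₀^2)^(1-p/s) * (u^(-s:ℝ))^(1-p/s)) := by
          rw [Real.mul_rpow hKe.le (Real.rpow_nonneg hu0.le _)]
      _ = (K'*ε₀^2) * (u^(-s:ℝ))^(1-p/s) := by
          rw [← mul_assoc, ← Real.rpow_add hKe, show p/s + (1-p/s) = (1:ℝ) by ring,
            Real.rpow_one]
      _ = K' * ε₀^2 * u ^ (p-s:ℝ) := by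
          rw [← Real.rpow_mul hu0.le, show (-s)*(1-p/s) = p - s by field_simp; ring]
  -- Step E : conclusion
  intro p hp u₁ u₂ hu₁ h12 u hu
  have h3 := hiii p hp u₁ u₂ hu₁ h12 u hu
  have hD := hDp p hp u₁ hu₁
  obtain ⟨hBn, hFn⟩ := hBF p hp u₁ u₂ hu₁ h12
  have hpB : 0 ≤ p * B p u₁ u₂ := mul_nonneg hp.1 hBn
  have hx : (0:ℝ) < u₁ ^ (p-s:ℝ) := by positivity
  have h7 : C * E p u₁ ≤ C * (K' * ε₀^2 * u₁^(p-s:ℝ)) := by gcongr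
  nlinarith [h3, h7]
end

section
/- Let s ∈ (1,2], C ≥ 1 and ε₀ ≥ 0. Let E : [1,∞) → [0,∞) be measurable and let B, F : [0,1] × {(u₁,u₂) : 1 ≤ u₁ ≤ u₂} → [0,∞) satisfy: (a) B(p,u₁,u₂) + F(p,u₁,u₂) ≤ C·ε₀²·u₁^{p−s} for all p ∈ [0,1] and 1 ≤ u₁ ≤ u₂; (b) B(1,u₁,u₂) ≥ ∫_{u₁}^{u₂} E(u) du for all 1 ≤ u₁ ≤ u₂; (c) E(u₂) ≤ C·(E(u₁) + ε₀²·u₁^{−s}) for all 1 ≤ u₁ ≤ u₂; (d) E(1) ≤ C·ε₀². Then there exists C′ depending only on s and C such that E(u) ≤ C′·ε₀²·u^{−s} for all u ≥ 1, and consequently B(0,u₁,u₂) + sup_{u∈[u₁,u₂]} E(u) + F(0,u₁,u₂) ≤ C′·ε₀²·u₁^{−s} for all 1 ≤ u₁ ≤ u₂. -/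
open MeasureTheory

/-- Pigeonhole: if the integral of a nonnegative measurable `E` over `[a,b]` is at most `M`,
then some point of `[a,b]` has `E ≤ 2M/(b-a)`. -/
lemma dyadic_pigeonhole (E : ℝ → ℝ) (hE : Measurable E) (a b M : ℝ) (hab : a < b)
    (hM : 0 ≤ M)
    (hI : ∫⁻ u in Set.Icc a b, ENNReal.ofReal (E u) ≤ ENNReal.ofReal M) :
    ∃ u ∈ Set.Icc a b, E u ≤ 2 * M / (b - a) := by
  by_contra h
  push_neg at h
  have hba : (0:ℝ) < b - a := by linarith
  rcases eq_or_lt_of_le hM with hM0 | hM0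
  · -- M = 0 : integral is 0, so E vanishes a.e., contradicting E > 0 on all of [a,b]
    have hI0 : ∫⁻ u in Set.Icc a b, ENNReal.ofReal (E u) = 0 := by
      refine le_antisymm ?_ zero_le
      simpa [← hM0] using hI
    have hmeas : Measurable fun u => ENNReal.ofReal (E u) :=
      ENNReal.measurable_ofReal.comp hE
    have hae := (lintegral_eq_zero_iff hmeas).mp hI0
    have hnull : (volume.restrict (Set.Icc a b)) {u | ¬ ENNReal.ofReal (E u) = (0 : ENNReal)} = 0 :=
      ae_iff.mp hae
    have hnull : (volume.restrict (Set.Icc a b)) {u | ENNReal.ofReal (E u) ≠ 0} = 0 := hnull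
    have hsub : Set.Icc a b ⊆ {u | ENNReal.ofReal (E u) ≠ 0} := by
      intro u hu
      have : (0:ℝ) < E u := lt_of_le_of_lt (by positivity) (h u hu)
      simp [Set.mem_setOf_eq, ENNReal.ofReal_eq_zero, not_le, this]
    have hfull : (volume.restrict (Set.Icc a b)) {u | ENNReal.ofReal (E u) ≠ 0}
        = ENNReal.ofReal (b - a) := by
      rw [Measure.restrict_apply₀' measurableSet_Icc.nullMeasurableSet,
        Set.inter_eq_self_of_subset_right hsub]
      simp [Real.volume_Icc]
    rw [hfull] at hnull
    rw [ENNReal.ofReal_eq_zero] at hnull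
    linarith
  · -- M > 0 : the integral is at least 2M > M, contradiction
    set t : ℝ := 2 * M / (b - a) with ht
    have hlb : ENNReal.ofReal t * volume (Set.Icc a b)
        ≤ ∫⁻ u in Set.Icc a b, ENNReal.ofReal (E u) := by
      rw [← setLIntegral_const (Set.Icc a b) (ENNReal.ofReal t)]
      exact setLIntegral_mono (ENNReal.measurable_ofReal.comp hE)
        fun u hu => ENNReal.ofReal_le_ofReal (h u hu).le
    have hvol : volume (Set.Icc a b) = ENNReal.ofReal (b - a) := by
      simp [Real.volume_Icc]
    have heq : ENNReal.ofReal t * volume (Set.Icc a b) = ENNReal.ofReal (2 * M) := by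
      rw [hvol, ← ENNReal.ofReal_mul (by positivity)]
      congr 1
      field_simp [ht]
      rw [ht, div_mul_cancel₀ _ hba.ne']
    have : ENNReal.ofReal (2 * M) ≤ ENNReal.ofReal M := by
      calc ENNReal.ofReal (2 * M) = ENNReal.ofReal t * volume (Set.Icc a b) := heq.symm
        _ ≤ _ := hlb
        _ ≤ _ := hI
    rw [ENNReal.ofReal_le_ofReal_iff hM] at this
    linarith

/-- Abstract second dyadic lemma for `r^p`-weighted estimates in the interior region.
Given `s ∈ (1,2]`, `C ≥ 1`, `ε₀ ≥ 0`, a measurable nonnegative energy `E(u)` and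
nonnegative `B(p,u₁,u₂)`, `F(p,u₁,u₂)` (for `p ∈ [0,1]`, `1 ≤ u₁ ≤ u₂`) with:
(a) `B(p,u₁,u₂) + F(p,u₁,u₂) ≤ C ε₀² u₁^{p−s}`;
(b) `B(1,u₁,u₂) ≥ ∫_{u₁}^{u₂} E(u) du`;
(c) `E(u₂) ≤ C (E(u₁) + ε₀² u₁^{−s})`;
(d) `E(1) ≤ C ε₀²`;
then there is `C'` depending only on `s` and `C` with `E(u) ≤ C' ε₀² u^{−s}` for
all `u ≥ 1`, and consequently
`B(0,u₁,u₂) + sup_{u∈[u₁,u₂]} E(u) + F(0,u₁,u₂) ≤ C' ε₀² u₁^{−s}` for all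
`1 ≤ u₁ ≤ u₂` (the supremum being expressed by quantifying over `u ∈ [u₁,u₂]`). -/
theorem dyadic_second_lemma (s C : ℝ) (hs1 : 1 < s) (hs2 : s ≤ 2) (hC : 1 ≤ C) :
    ∃ C' : ℝ, 0 < C' ∧
      ∀ (ε₀ : ℝ), 0 ≤ ε₀ →
      ∀ (E : ℝ → ℝ) (B F : ℝ → ℝ → ℝ → ℝ),
      (∀ u, 1 ≤ u → 0 ≤ E u) →
      Measurable E →
      (∀ p ∈ Set.Icc (0:ℝ) 1, ∀ u₁ u₂, 1 ≤ u₁ → u₁ ≤ u₂ →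
        0 ≤ B p u₁ u₂ ∧ 0 ≤ F p u₁ u₂) →
      -- (a) established weighted bulk/flux decay for p ∈ [0,1]
      (∀ p ∈ Set.Icc (0:ℝ) 1, ∀ u₁ u₂, 1 ≤ u₁ → u₁ ≤ u₂ →
        B p u₁ u₂ + F p u₁ u₂ ≤ C * ε₀ ^ 2 * u₁ ^ (p - s)) →
      -- (b) the p = 1 bulk dominates the integral of the energy
      (∀ u₁ u₂, 1 ≤ u₁ → u₁ ≤ u₂ →
        ∫⁻ u in Set.Icc u₁ u₂, ENNReal.ofReal (E u)
          ≤ ENNReal.ofReal (B 1 u₁ u₂)) →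
      -- (c) one-sided energy propagation
      (∀ u₁ u₂, 1 ≤ u₁ → u₁ ≤ u₂ → E u₂ ≤ C * (E u₁ + ε₀ ^ 2 * u₁ ^ (-s))) →
      -- (d) initial smallness
      E 1 ≤ C * ε₀ ^ 2 →
      -- conclusions
      (∀ u, 1 ≤ u → E u ≤ C' * ε₀ ^ 2 * u ^ (-s)) ∧
      (∀ u₁ u₂, 1 ≤ u₁ → u₁ ≤ u₂ → ∀ u ∈ Set.Icc u₁ u₂,
        B 0 u₁ u₂ + E u + F 0 u₁ u₂ ≤ C' * ε₀ ^ 2 * u₁ ^ (-s)) := by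
  refine ⟨13 * C ^ 2, by positivity, ?_⟩
  intro ε₀ hε₀ E B F hEnn hEm hBFnn ha hb hc hd
  -- main decay estimate with constant 12 C²
  have key : ∀ u, 1 ≤ u → E u ≤ 12 * C ^ 2 * ε₀ ^ 2 * u ^ (-s) := by
    intro u hu
    have hu0 : (0:ℝ) < u := by linarith
    rcases le_or_gt u 2 with hu2 | hu2
    · -- 1 ≤ u ≤ 2 : propagate from u = 1
      have h1 : E u ≤ C * (E 1 + ε₀ ^ 2 * (1:ℝ) ^ (-s)) := hc 1 u le_rfl hu
      have h2 : E u ≤ C * (C + 1) * ε₀ ^ 2 := by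
        rw [Real.one_rpow] at h1
        nlinarith [hEnn u hu]
      have hus : (1:ℝ) / 4 ≤ u ^ (-s) := by
        have hh1 : (2:ℝ) ^ (-s) ≤ u ^ (-s) :=
          Real.rpow_le_rpow_of_nonpos hu0 hu2 (by linarith)
        have hh2 : (2:ℝ) ^ (-(2:ℝ)) ≤ (2:ℝ) ^ (-s) :=
          Real.rpow_le_rpow_of_exponent_le (by norm_num) (by linarith)
        have hh3 : (2:ℝ) ^ (-(2:ℝ)) = 1 / 4 := by
          rw [Real.rpow_neg (by norm_num : (0:ℝ) ≤ 2), Real.rpow_two]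
          norm_num
        rw [hh3] at hh2
        exact le_trans hh2 hh1
      have h4 : C * (C + 1) * ε₀ ^ 2 ≤ 3 * C ^ 2 * ε₀ ^ 2 := by
        have hpr : (0:ℝ) ≤ (2 * C - 1) * C * ε₀ ^ 2 :=
          mul_nonneg (mul_nonneg (by linarith) (by linarith)) (sq_nonneg ε₀)
        nlinarith [hpr]
      calc E u ≤ 3 * C ^ 2 * ε₀ ^ 2 := by linarith
        _ = 12 * C ^ 2 * ε₀ ^ 2 * (1 / 4) := by ring
        _ ≤ 12 * C ^ 2 * ε₀ ^ 2 * u ^ (-s) :=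
            mul_le_mul_of_nonneg_left hus (by positivity)
    · -- u > 2 : pigeonhole on [u/2, u]
      set a := u / 2 with hadef
      have ha1 : (1:ℝ) ≤ a := by simp [hadef]; linarith
      have ha0 : (0:ℝ) < a := by linarith
      have hab : a < u := by simp [hadef]; linarith
      set M : ℝ := C * ε₀ ^ 2 * a ^ (1 - s) with hMdef
      have hM0 : 0 ≤ M := by positivity
      have hBle : B 1 a u ≤ M := by
        have h := ha 1 (by norm_num) a u ha1 hab.le
        have hF := (hBFnn 1 (by norm_num) a u ha1 hab.le).2
        linarith
      have hI : ∫⁻ v in Set.Icc a u, ENNReal.ofReal (E v) ≤ ENNReal.ofReal M :=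
        le_trans (hb a u ha1 hab.le) (ENNReal.ofReal_le_ofReal hBle)
      obtain ⟨v, hv, hvE⟩ := dyadic_pigeonhole E hEm a u M hab hM0 hI
      have hv1 : (1:ℝ) ≤ v := le_trans ha1 hv.1
      have hua : u - a = a := by simp [hadef]; ring
      have hvE' : E v ≤ 2 * C * ε₀ ^ 2 * a ^ (-s) := by
        have : 2 * M / (u - a) = 2 * C * ε₀ ^ 2 * a ^ (-s) := by
          rw [hua, hMdef]
          rw [show (1:ℝ) - s = -s + 1 by ring, Real.rpow_add ha0, Real.rpow_one]
          field_simp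
        linarith [hvE, this.le, this.ge]
      -- propagate from v to u
      have hEu : E u ≤ C * (E v + ε₀ ^ 2 * v ^ (-s)) := hc v u hv1 hv.2
      have hvs : v ^ (-s) ≤ a ^ (-s) :=
        Real.rpow_le_rpow_of_nonpos ha0 hv.1 (by linarith)
      have has : a ^ (-s) ≤ 4 * u ^ (-s) := by
        have h2s : (2:ℝ) ^ s ≤ 4 := by
          have := Real.rpow_le_rpow_of_exponent_le (by norm_num : (1:ℝ) ≤ 2) hs2
          rwa [show ((2:ℝ) ^ (2:ℝ)) = 4 by
            rw [show (2:ℝ) = ((2:ℕ):ℝ) by norm_num, Real.rpow_natCast]; norm_num] at this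
        have hdiv : a ^ (-s) = u ^ (-s) * 2 ^ s := by
          rw [hadef, Real.div_rpow hu0.le (by norm_num : (0:ℝ) ≤ 2),
            Real.rpow_neg (by norm_num : (0:ℝ) ≤ 2)]
          field_simp
        rw [hdiv]
        have : (0:ℝ) ≤ u ^ (-s) := Real.rpow_nonneg hu0.le _
        nlinarith
      calc E u ≤ C * (E v + ε₀ ^ 2 * v ^ (-s)) := hEu
        _ ≤ C * (2 * C * ε₀ ^ 2 * a ^ (-s) + ε₀ ^ 2 * a ^ (-s)) := by
            have h1 : ε₀ ^ 2 * v ^ (-s) ≤ ε₀ ^ 2 * a ^ (-s) := by nlinarith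
            nlinarith
        _ = (2 * C + 1) * C * ε₀ ^ 2 * a ^ (-s) := by ring
        _ ≤ (2 * C + 1) * C * ε₀ ^ 2 * (4 * u ^ (-s)) :=
            mul_le_mul_of_nonneg_left has (by positivity)
        _ = (8 * C + 4) * C * ε₀ ^ 2 * u ^ (-s) := by ring
        _ ≤ 12 * C ^ 2 * ε₀ ^ 2 * u ^ (-s) := by
            refine mul_le_mul_of_nonneg_right ?_ (Real.rpow_nonneg hu0.le _)
            have hpr : (0:ℝ) ≤ 4 * ((C - 1) * C * ε₀ ^ 2) :=
              mul_nonneg (by norm_num)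
                (mul_nonneg (mul_nonneg (by linarith) (by linarith)) (sq_nonneg ε₀))
            nlinarith [hpr]
  constructor
  · intro u hu
    have hup : (0:ℝ) ≤ u ^ (-s) := Real.rpow_nonneg (by linarith) _
    refine le_trans (key u hu) (mul_le_mul_of_nonneg_right ?_ hup)
    have hpr : (0:ℝ) ≤ C ^ 2 * ε₀ ^ 2 := by positivity
    nlinarith [hpr]
  · intro u₁ u₂ h1 h12 u hu
    have hu1 : (1:ℝ) ≤ u := le_trans h1 hu.1
    have hEu := key u hu1
    have hus : u ^ (-s) ≤ u₁ ^ (-s) :=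
      Real.rpow_le_rpow_of_nonpos (by linarith) hu.1 (by linarith)
    have haBF := ha 0 (by norm_num) u₁ u₂ h1 h12
    rw [zero_sub] at haBF
    have hu1p : (0:ℝ) ≤ u₁ ^ (-s) := Real.rpow_nonneg (by linarith) _
    have hE' : E u ≤ 12 * C ^ 2 * ε₀ ^ 2 * u₁ ^ (-s) :=
      le_trans hEu (mul_le_mul_of_nonneg_left hus (by positivity))
    have hBF' : B 0 u₁ u₂ + F 0 u₁ u₂ ≤ C ^ 2 * ε₀ ^ 2 * u₁ ^ (-s) := by
      refine le_trans haBF (mul_le_mul_of_nonneg_right ?_ hu1p)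
      have hpr : (0:ℝ) ≤ (C - 1) * C * ε₀ ^ 2 :=
        mul_nonneg (mul_nonneg (by linarith) (by linarith)) (sq_nonneg ε₀)
      nlinarith [hpr]
    calc B 0 u₁ u₂ + E u + F 0 u₁ u₂
        = (B 0 u₁ u₂ + F 0 u₁ u₂) + E u := by ring
      _ ≤ C ^ 2 * ε₀ ^ 2 * u₁ ^ (-s) + 12 * C ^ 2 * ε₀ ^ 2 * u₁ ^ (-s) :=
          add_le_add hBF' hE'
      _ = 13 * C ^ 2 * ε₀ ^ 2 * u₁ ^ (-s) := by ring
end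

section
/- Let s ∈ (1,2] and let p, p₁, p₂, ℓ ∈ ℝ with p ≤ s, p₁ ≤ s, p₂ ≤ s, ℓ ≤ s and 2p < p₁ + p₂ + ℓ + 1. Let ε ≥ 0, T ≥ 2 and u₀ ≤ 1. Set ⟨u⟩ := √(1+u²) and r(t,u) := t + |u|. Let f, g : [2,T] × (−∞,u₀] → [0,∞) be measurable and assume that for every u ≤ u₀: ∫_2^T r(t,u)^{p₁} f(t,u)² dt ≤ ε² ⟨u⟩^{p₁−s} and ∫_2^T r(t,u)^{p₂} g(t,u)² dt ≤ ε² ⟨u⟩^{p₂−s}. Then there is a constant C depending only on s, p, p₁, p₂, ℓ such that ∫_{−∞}^{u₀} ∫_2^T r(t,u)^{p−(ℓ+1)/2} ⟨u⟩^{−(s−ℓ)/2} f(t,u) g(t,u) dt du ≤ C · ε² · ⟨u₀⟩^{p−s}. -/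
open MeasureTheory

set_option maxHeartbeats 2000000 in

/-- Flat model of the exterior-region nonlinear error estimate
`𝒩_p¹[𝔼_{p₁}, 𝕆_ℓ·𝔼_{p₂}](ᵉV) ≲ ε³⟨u⟩^{−(s−p)}` (case (1) of the Appendix theorem),
here stated with two `ε`-size flux factors. With `⟨u⟩ = √(1+u²)`, `r(t,u) = t+|u|`:
if for every `u ≤ u₀` the null-cone fluxes satisfy
`∫_2^T r^{p₁} f² dt ≤ ε²⟨u⟩^{p₁−s}` and `∫_2^T r^{p₂} g² dt ≤ ε²⟨u⟩^{p₂−s}`, then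
`∫_{−∞}^{u₀} ∫_2^T r^{p−(ℓ+1)/2} ⟨u⟩^{−(s−ℓ)/2} f g dt du ≤ C ε² ⟨u₀⟩^{p−s}`,
with `C` depending only on `s, p, p₁, p₂, ℓ`, provided `2p < p₁+p₂+ℓ+1`. -/
theorem exterior_error_estimate_EE (s p p₁ p₂ ℓ : ℝ) (hs1 : 1 < s) (hs2 : s ≤ 2)
    (hp : p ≤ s) (hp₁ : p₁ ≤ s) (hp₂ : p₂ ≤ s) (hℓ : ℓ ≤ s)
    (hlt : 2 * p < p₁ + p₂ + ℓ + 1) :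
    ∃ C : ℝ, 0 < C ∧
      ∀ (ε T u₀ : ℝ), 0 ≤ ε → 2 ≤ T → u₀ ≤ 1 →
      ∀ f g : ℝ → ℝ → ℝ,
        Measurable (Function.uncurry f) → Measurable (Function.uncurry g) →
        (∀ t ∈ Set.Icc (2:ℝ) T, ∀ u ≤ u₀, 0 ≤ f t u) →
        (∀ t ∈ Set.Icc (2:ℝ) T, ∀ u ≤ u₀, 0 ≤ g t u) →
        (∀ u ≤ u₀, ∫⁻ t in Set.Icc (2:ℝ) T,
            ENNReal.ofReal ((t + |u|) ^ p₁ * f t u ^ 2)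
          ≤ ENNReal.ofReal (ε ^ 2 * Real.sqrt (1 + u ^ 2) ^ (p₁ - s))) →
        (∀ u ≤ u₀, ∫⁻ t in Set.Icc (2:ℝ) T,
            ENNReal.ofReal ((t + |u|) ^ p₂ * g t u ^ 2)
          ≤ ENNReal.ofReal (ε ^ 2 * Real.sqrt (1 + u ^ 2) ^ (p₂ - s))) →
        ∫⁻ u in Set.Iic u₀, ∫⁻ t in Set.Icc (2:ℝ) T,
            ENNReal.ofReal ((t + |u|) ^ (p - (ℓ + 1) / 2)
              * Real.sqrt (1 + u ^ 2) ^ (-((s - ℓ) / 2)) * f t u * g t u)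
          ≤ ENNReal.ofReal (C * ε ^ 2 * Real.sqrt (1 + u₀ ^ 2) ^ (p - s)) := by
  have hβ : (1:ℝ) < (s + 1) / 2 := by linarith
  set β : ℝ := (s + 1) / 2 with hβdef
  set q : ℝ := p - (ℓ + 1) / 2 - (p₁ + p₂) / 2 with hqdef
  have hq0 : q < 0 := by simp only [hqdef]; linarith
  set c : ℝ := q - (s - ℓ) / 2 with hcdef
  have hint : Integrable (fun u : ℝ => ((1:ℝ) + u ^ 2) ^ (-β / 2)) := by
    have h := integrable_rpow_neg_one_add_norm_sq (E := ℝ) (μ := volume) (r := β)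
      (by simpa using hβ)
    simpa [Real.norm_eq_abs, sq_abs] using h
  set I : ℝ := ∫ u : ℝ, ((1:ℝ) + u ^ 2) ^ (-β / 2) with hIdef
  have hI0 : 0 ≤ I := integral_nonneg fun u => Real.rpow_nonneg (by positivity) _
  have hC0 : 0 < Real.sqrt 2 ^ (s - p) * I + 1 := by
    nlinarith [mul_nonneg (Real.rpow_nonneg (Real.sqrt_nonneg 2) (s - p)) hI0]
  refine ⟨Real.sqrt 2 ^ (s - p) * I + 1, hC0, ?_⟩
  intro ε T u₀ hε hT hu₀ f g hfm hgm hf0 hg0 hF hG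
  have hA1 : ∀ u : ℝ, 1 ≤ Real.sqrt (1 + u ^ 2) := fun u => by
    have := Real.sqrt_le_sqrt (show (1:ℝ) ≤ 1 + u ^ 2 by linarith only [sq_nonneg u])
    simpa using this
  -- inner (flux) bound
  have key : ∀ u, u ≤ u₀ →
      (∫⁻ t in Set.Icc (2:ℝ) T,
        ENNReal.ofReal ((t + |u|) ^ (p - (ℓ + 1) / 2)
          * Real.sqrt (1 + u ^ 2) ^ (-((s - ℓ) / 2)) * f t u * g t u))
      ≤ ENNReal.ofReal (ε ^ 2 * Real.sqrt (1 + u ^ 2) ^ (p - s - β)) := by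
    intro u hu
    set A : ℝ := Real.sqrt (1 + u ^ 2) with hAdef
    have hA1' : 1 ≤ A := hA1 u
    have hA0 : 0 < A := lt_of_lt_of_le one_pos hA1'
    clear_value A
    set C₁ : ℝ := A ^ c * A ^ ((p₂ - p₁) / 2) / 2 with hC₁def
    set C₂ : ℝ := A ^ c * A ^ ((p₁ - p₂) / 2) / 2 with hC₂def
    have hC₁0 : 0 ≤ C₁ := by
      rw [hC₁def]
      exact div_nonneg (mul_nonneg (Real.rpow_nonneg hA0.le _) (Real.rpow_nonneg hA0.le _))
        two_pos.le
    have hC₂0 : 0 ≤ C₂ := by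
      rw [hC₂def]
      exact div_nonneg (mul_nonneg (Real.rpow_nonneg hA0.le _) (Real.rpow_nonneg hA0.le _))
        two_pos.le
    clear_value C₁ C₂
    have hfu : Measurable fun t => f t u := hfm.comp (measurable_id.prodMk measurable_const)
    have hgu : Measurable fun t => g t u := hgm.comp (measurable_id.prodMk measurable_const)
    have hpt : ∀ t ∈ Set.Icc (2:ℝ) T,
        (t + |u|) ^ (p - (ℓ + 1) / 2) * A ^ (-((s - ℓ) / 2)) * f t u * g t u
        ≤ C₁ * ((t + |u|) ^ p₁ * f t u ^ 2) + C₂ * ((t + |u|) ^ p₂ * g t u ^ 2) := by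
      intro t ht
      have ht2 : (2:ℝ) ≤ t := ht.1
      set r : ℝ := t + |u| with hrdef
      have hr0 : 0 < r := by
        have h := abs_nonneg u; simp only [hrdef]; linarith only [h, ht2]
      have hAr : A ≤ r := by
        have h1 : A ≤ 1 + |u| := by
          rw [hAdef, show (1:ℝ) + |u| = Real.sqrt ((1 + |u|) ^ 2) from
            (Real.sqrt_sq (by positivity)).symm]
          exact Real.sqrt_le_sqrt (by linarith only [abs_nonneg u, sq_abs u])
        simp only [hrdef]; linarith only [h1, ht2]
      have hf' : 0 ≤ f t u := hf0 t ht u hu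
      have hg' : 0 ≤ g t u := hg0 t ht u hu
      have hsplit : r ^ (p - (ℓ + 1) / 2) = r ^ q * r ^ (p₁ / 2) * r ^ (p₂ / 2) := by
        rw [← Real.rpow_add hr0, ← Real.rpow_add hr0]; congr 1; simp only [hqdef]; ring
      have hqle : r ^ q ≤ A ^ q := Real.rpow_le_rpow_of_nonpos hA0 hAr hq0.le
      set a : ℝ := r ^ (p₁ / 2) * f t u with hadef
      set b : ℝ := r ^ (p₂ / 2) * g t u with hbdef
      have ha0 : 0 ≤ a := mul_nonneg (Real.rpow_nonneg hr0.le _) hf'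
      have hb0 : 0 ≤ b := mul_nonneg (Real.rpow_nonneg hr0.le _) hg'
      set M₁ : ℝ := A ^ ((p₂ - p₁) / 4) with hM₁def
      set M₂ : ℝ := A ^ ((p₁ - p₂) / 4) with hM₂def
      have hMM : M₁ * M₂ = 1 := by
        rw [hM₁def, hM₂def, ← Real.rpow_add hA0,
          show (p₂ - p₁) / 4 + (p₁ - p₂) / 4 = 0 by ring, Real.rpow_zero]
      have hM₁sq : M₁ ^ 2 = A ^ ((p₂ - p₁) / 2) := by
        rw [hM₁def, sq, ← Real.rpow_add hA0]; congr 1; ring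
      have hM₂sq : M₂ ^ 2 = A ^ ((p₁ - p₂) / 2) := by
        rw [hM₂def, sq, ← Real.rpow_add hA0]; congr 1; ring
      clear_value r a b M₁ M₂
      have hamgm : a * b ≤ (M₁ ^ 2 * a ^ 2 + M₂ ^ 2 * b ^ 2) / 2 := by
        have h2 : 2 * (M₁ * M₂) * (a * b) ≤ M₁ ^ 2 * a ^ 2 + M₂ ^ 2 * b ^ 2 := by
          linarith only [sq_nonneg (M₁ * a - M₂ * b)]
        rw [hMM] at h2; linarith only [h2]
      have ha2 : a ^ 2 = r ^ p₁ * f t u ^ 2 := by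
        rw [hadef, mul_pow]; congr 1; rw [sq, ← Real.rpow_add hr0]; congr 1; ring
      have hb2 : b ^ 2 = r ^ p₂ * g t u ^ 2 := by
        rw [hbdef, mul_pow]; congr 1; rw [sq, ← Real.rpow_add hr0]; congr 1; ring
      have hcw : A ^ q * A ^ (-((s - ℓ) / 2)) = A ^ c := by
        rw [← Real.rpow_add hA0]
        congr 1
        all_goals (try simp only [hcdef])
        all_goals (try ring)
      have hw0 : 0 ≤ A ^ (-((s - ℓ) / 2)) := Real.rpow_nonneg hA0.le _
      calc r ^ (p - (ℓ + 1) / 2) * A ^ (-((s - ℓ) / 2)) * f t u * g t u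
          = r ^ q * (A ^ (-((s - ℓ) / 2)) * (a * b)) := by
            rw [hsplit, hadef, hbdef]; ring
        _ ≤ A ^ q * (A ^ (-((s - ℓ) / 2)) * (a * b)) :=
            mul_le_mul_of_nonneg_right hqle (mul_nonneg hw0 (mul_nonneg ha0 hb0))
        _ ≤ A ^ q * (A ^ (-((s - ℓ) / 2)) * ((M₁ ^ 2 * a ^ 2 + M₂ ^ 2 * b ^ 2) / 2)) :=
            mul_le_mul_of_nonneg_left (mul_le_mul_of_nonneg_left hamgm hw0)
              (Real.rpow_nonneg hA0.le _)
        _ = C₁ * (r ^ p₁ * f t u ^ 2) + C₂ * (r ^ p₂ * g t u ^ 2) := by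
            rw [← ha2, ← hb2, hC₁def, hC₂def, ← hM₁sq, ← hM₂sq, ← hcw]; ring
    calc (∫⁻ t in Set.Icc (2:ℝ) T,
          ENNReal.ofReal ((t + |u|) ^ (p - (ℓ + 1) / 2)
            * A ^ (-((s - ℓ) / 2)) * f t u * g t u))
        ≤ ∫⁻ t in Set.Icc (2:ℝ) T,
            (ENNReal.ofReal C₁ * ENNReal.ofReal ((t + |u|) ^ p₁ * f t u ^ 2)
              + ENNReal.ofReal C₂ * ENNReal.ofReal ((t + |u|) ^ p₂ * g t u ^ 2)) := by
          refine setLIntegral_mono' measurableSet_Icc fun t ht => ?_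
          have hr0 : (0:ℝ) ≤ t + |u| := by have := abs_nonneg u; linarith [ht.1]
          rw [← ENNReal.ofReal_mul hC₁0, ← ENNReal.ofReal_mul hC₂0, ← ENNReal.ofReal_add
            (mul_nonneg hC₁0 (mul_nonneg (Real.rpow_nonneg hr0 _) (sq_nonneg _)))
            (mul_nonneg hC₂0 (mul_nonneg (Real.rpow_nonneg hr0 _) (sq_nonneg _)))]
          exact ENNReal.ofReal_le_ofReal (hpt t ht)
      _ = ENNReal.ofReal C₁ * (∫⁻ t in Set.Icc (2:ℝ) T,
              ENNReal.ofReal ((t + |u|) ^ p₁ * f t u ^ 2))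
            + ENNReal.ofReal C₂ * (∫⁻ t in Set.Icc (2:ℝ) T,
              ENNReal.ofReal ((t + |u|) ^ p₂ * g t u ^ 2)) := by
          rw [lintegral_add_left]
          · rw [lintegral_const_mul' _ _ ENNReal.ofReal_ne_top,
              lintegral_const_mul' _ _ ENNReal.ofReal_ne_top]
          · exact (Measurable.ennreal_ofReal (by fun_prop)).const_mul _
      _ ≤ ENNReal.ofReal C₁ * ENNReal.ofReal (ε ^ 2 * A ^ (p₁ - s))
            + ENNReal.ofReal C₂ * ENNReal.ofReal (ε ^ 2 * A ^ (p₂ - s)) := by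
          have hFu := hF u hu
          have hGu := hG u hu
          rw [← hAdef] at hFu hGu
          exact add_le_add (mul_le_mul_right hFu _) (mul_le_mul_right hGu _)
      _ = ENNReal.ofReal (C₁ * (ε ^ 2 * A ^ (p₁ - s)) + C₂ * (ε ^ 2 * A ^ (p₂ - s))) := by
          rw [← ENNReal.ofReal_mul hC₁0, ← ENNReal.ofReal_mul hC₂0,
            ← ENNReal.ofReal_add
              (mul_nonneg hC₁0 (mul_nonneg (sq_nonneg _) (Real.rpow_nonneg hA0.le _)))
              (mul_nonneg hC₂0 (mul_nonneg (sq_nonneg _) (Real.rpow_nonneg hA0.le _)))]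
      _ = ENNReal.ofReal (ε ^ 2 * A ^ (p - s - β)) := by
          congr 1
          have e₁ : A ^ c * A ^ ((p₂ - p₁) / 2) * A ^ (p₁ - s) = A ^ (p - s - β) := by
            rw [← Real.rpow_add hA0, ← Real.rpow_add hA0]; congr 1
            simp only [hcdef, hqdef, hβdef]; try ring
          have e₂ : A ^ c * A ^ ((p₁ - p₂) / 2) * A ^ (p₂ - s) = A ^ (p - s - β) := by
            rw [← Real.rpow_add hA0, ← Real.rpow_add hA0]; congr 1
            simp only [hcdef, hqdef, hβdef]; try ring
          rw [hC₁def, hC₂def]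
          linear_combination (ε ^ 2 / 2) * e₁ + (ε ^ 2 / 2) * e₂
  -- outer integral
  have hAu₀ : 0 < Real.sqrt (1 + u₀ ^ 2) := lt_of_lt_of_le one_pos (hA1 u₀)
  set D : ℝ := ε ^ 2 * (Real.sqrt 2 ^ (s - p) * Real.sqrt (1 + u₀ ^ 2) ^ (p - s)) with hDdef
  have hD0 : 0 ≤ D := by positivity
  have hptw : ∀ u ∈ Set.Iic u₀,
      ε ^ 2 * Real.sqrt (1 + u ^ 2) ^ (p - s - β) ≤ D * ((1 + u ^ 2) ^ (-β / 2)) := by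
    intro u hu
    set A : ℝ := Real.sqrt (1 + u ^ 2) with hAdef
    have hA1' : 1 ≤ A := hA1 u
    have hA0 : 0 < A := lt_of_lt_of_le one_pos hA1'
    have hAβ : A ^ (-β) = (1 + u ^ 2) ^ (-β / 2) := by
      rw [hAdef, Real.sqrt_eq_rpow, ← Real.rpow_mul (by positivity : (0:ℝ) ≤ 1 + u ^ 2)]
      congr 1; ring
    have hu' : u ≤ u₀ := hu
    have h12 : 1 + u₀ ^ 2 ≤ 2 * (1 + u ^ 2) := by
      rcases le_or_gt u₀ 0 with h | h
      · linarith only [mul_nonneg (sub_nonneg.mpr hu' : (0:ℝ) ≤ u₀ - u)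
          (by linarith only [hu', h] : (0:ℝ) ≤ -u₀ - u), sq_nonneg u]
      · nlinarith only [sq_nonneg u, h.le, hu₀]
    have hAu : Real.sqrt (1 + u₀ ^ 2) / Real.sqrt 2 ≤ A := by
      rw [div_le_iff₀ (Real.sqrt_pos.mpr two_pos)]
      calc Real.sqrt (1 + u₀ ^ 2) ≤ Real.sqrt (2 * (1 + u ^ 2)) := Real.sqrt_le_sqrt h12
        _ = A * Real.sqrt 2 := by
            rw [Real.sqrt_mul (by norm_num : (0:ℝ) ≤ 2), hAdef]; ring
    have h1 : A ^ (p - s) ≤ Real.sqrt 2 ^ (s - p) * Real.sqrt (1 + u₀ ^ 2) ^ (p - s) := by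
      have h2 := Real.rpow_le_rpow_of_nonpos (by positivity) hAu (sub_nonpos.mpr hp)
      calc A ^ (p - s) ≤ (Real.sqrt (1 + u₀ ^ 2) / Real.sqrt 2) ^ (p - s) := h2
        _ = Real.sqrt 2 ^ (s - p) * Real.sqrt (1 + u₀ ^ 2) ^ (p - s) := by
            rw [Real.div_rpow (Real.sqrt_nonneg _) (Real.sqrt_nonneg _), div_eq_mul_inv,
              ← Real.rpow_neg (Real.sqrt_nonneg 2), show -(p - s) = s - p by ring]
            ring
    have hsplit2 : A ^ (p - s - β) = A ^ (p - s) * ((1 + u ^ 2) ^ (-β / 2)) := by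
      rw [show p - s - β = p - s + -β by ring, Real.rpow_add hA0, hAβ]
    rw [hsplit2, hDdef]
    have hZ0 : 0 ≤ (1 + u ^ 2 : ℝ) ^ (-β / 2) := Real.rpow_nonneg (by positivity) _
    linarith only [mul_le_mul_of_nonneg_left (mul_le_mul_of_nonneg_right h1 hZ0) (sq_nonneg ε)]
  calc (∫⁻ u in Set.Iic u₀, ∫⁻ t in Set.Icc (2:ℝ) T,
        ENNReal.ofReal ((t + |u|) ^ (p - (ℓ + 1) / 2)
          * Real.sqrt (1 + u ^ 2) ^ (-((s - ℓ) / 2)) * f t u * g t u))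
      ≤ ∫⁻ u in Set.Iic u₀,
          ENNReal.ofReal D * ENNReal.ofReal ((1 + u ^ 2) ^ (-β / 2)) := by
        refine setLIntegral_mono' measurableSet_Iic fun u hu => ?_
        refine (key u hu).trans ?_
        rw [← ENNReal.ofReal_mul hD0]
        exact ENNReal.ofReal_le_ofReal (hptw u hu)
    _ = ENNReal.ofReal D * ∫⁻ u in Set.Iic u₀, ENNReal.ofReal ((1 + u ^ 2) ^ (-β / 2)) :=
        lintegral_const_mul' _ _ ENNReal.ofReal_ne_top
    _ ≤ ENNReal.ofReal D * ∫⁻ u, ENNReal.ofReal ((1 + u ^ 2) ^ (-β / 2)) :=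
        mul_le_mul_right (setLIntegral_le_lintegral _ _) _
    _ = ENNReal.ofReal D * ENNReal.ofReal I := by
        rw [← ofReal_integral_eq_lintegral_ofReal hint
          (ae_of_all _ fun u => Real.rpow_nonneg (by positivity) _)]
    _ ≤ ENNReal.ofReal ((Real.sqrt 2 ^ (s - p) * I + 1) * ε ^ 2
          * Real.sqrt (1 + u₀ ^ 2) ^ (p - s)) := by
        rw [← ENNReal.ofReal_mul hD0]
        apply ENNReal.ofReal_le_ofReal
        rw [hDdef]
        linarith only [mul_nonneg (sq_nonneg ε) (Real.rpow_nonneg hAu₀.le (p - s))]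
end

section
/- Let s ∈ (1,2] and let p, p₁, p₂, ℓ ∈ ℝ with p ≤ s, p₁ ≤ s, p₂ ≤ s, ℓ ≤ s, 2p < p₁ + p₂ + ℓ and 2p + 1 < p₁ + p₂ + s. Let ε ≥ 0, T ≥ 2 and u₀ ≤ 1. Set ⟨u⟩ := √(1+u²) and r(t,u) := t + |u|. Let f, g : [2,T] × (−∞,u₀] → [0,∞) be measurable and assume: for every u ≤ u₀, ∫_2^T r(t,u)^{p₁} f(t,u)² dt ≤ ε² ⟨u⟩^{p₁−s}, and for every t ∈ [2,T], ∫_{−∞}^{u₀} r(t,u)^{p₂} g(t,u)² du ≤ ε² ⟨u₀⟩^{p₂−s}. Then there is a constant C depending only on s, p, p₁, p₂, ℓ such that ∫_{−∞}^{u₀} ∫_2^T r(t,u)^{p−(ℓ+1)/2} ⟨u⟩^{−(s−ℓ)/2} f(t,u) g(t,u) dt du ≤ C · ε² · ⟨u₀⟩^{p−s}. -/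
open MeasureTheory


open MeasureTheory Set

lemma amgm_aux {W X Y F G : ℝ} (hX : 0 ≤ X) (hY : 0 ≤ Y) (hF : 0 ≤ F) (hG : 0 ≤ G)
    (hW0 : 0 ≤ W) (hW : W ^ 2 = X * Y) : W * F * G ≤ (X * F ^ 2 + Y * G ^ 2) / 2 := by
  have hW' : W = Real.sqrt X * Real.sqrt Y := by
    rw [← Real.sqrt_mul hX, ← hW, Real.sqrt_sq hW0]
  have h1 := sq_nonneg (Real.sqrt X * F - Real.sqrt Y * G)
  have h2 : Real.sqrt X ^ 2 = X := Real.sq_sqrt hX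
  have h3 : Real.sqrt Y ^ 2 = Y := Real.sq_sqrt hY
  nlinarith [Real.sqrt_nonneg X, Real.sqrt_nonneg Y, mul_nonneg hF hG]

/-- t-integral lemma -/
lemma t_int (x : ℝ) (hx : x < -1) :
    ∃ C : ℝ, 0 < C ∧ ∀ T : ℝ,
      ∫⁻ t in Set.Icc (2:ℝ) T, ENNReal.ofReal (t ^ x) ≤ ENNReal.ofReal C := by
  have hint : IntegrableOn (fun t : ℝ => t ^ x) (Ioi (1:ℝ)) :=
    integrableOn_Ioi_rpow_of_lt hx one_pos
  have hfin : (∫⁻ t in Ioi (1:ℝ), ENNReal.ofReal (t ^ x)) < ⊤ := by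
    refine lt_of_le_of_lt ?_ hint.2
    exact lintegral_mono fun t => Real.ofReal_le_enorm _
  refine ⟨(∫⁻ t in Ioi (1:ℝ), ENNReal.ofReal (t ^ x)).toReal + 1, by positivity, fun T => ?_⟩
  calc ∫⁻ t in Set.Icc (2:ℝ) T, ENNReal.ofReal (t ^ x)
      ≤ ∫⁻ t in Ioi (1:ℝ), ENNReal.ofReal (t ^ x) :=
        lintegral_mono_set (fun t ht => lt_of_lt_of_le one_lt_two ht.1)
    _ ≤ ENNReal.ofReal ((∫⁻ t in Ioi (1:ℝ), ENNReal.ofReal (t ^ x)).toReal + 1) := by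
        conv_lhs => rw [← ENNReal.ofReal_toReal hfin.ne]
        exact ENNReal.ofReal_le_ofReal (by linarith)

/-- exact value of lintegral of rpow on Ioi -/
lemma lint_Ioi_rpow {q c : ℝ} (hq : q < -1) (hc : 0 < c) :
    ∫⁻ y in Ioi c, ENNReal.ofReal (y ^ q) = ENNReal.ofReal (c ^ (q + 1) / (-(q + 1))) := by
  rw [← ofReal_integral_eq_lintegral_ofReal (integrableOn_Ioi_rpow_of_lt hq hc)
    ((ae_restrict_iff' measurableSet_Ioi).2 (ae_of_all _ fun y hy =>
      Real.rpow_nonneg (le_of_lt (hc.trans hy)) q))]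
  rw [integral_Ioi_rpow_of_lt hq hc]
  rw [neg_div, div_neg]

lemma meas_ofReal_rpow (c q : ℝ) : Measurable (fun u : ℝ => ENNReal.ofReal ((c - u) ^ q)) := by
  fun_prop

/-- u-integral lemma -/
lemma u_int (q : ℝ) (hq : q < -1) :
    ∃ C : ℝ, 0 < C ∧ ∀ u₀ : ℝ, u₀ ≤ 1 →
      ∫⁻ u in Set.Iic u₀, ENNReal.ofReal (Real.sqrt (1 + u ^ 2) ^ q)
        ≤ ENNReal.ofReal (C * Real.sqrt (1 + u₀ ^ 2) ^ (q + 1)) := by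
  have hq0 : q ≤ 0 := by linarith
  have hq1 : q + 1 ≤ 0 := by linarith
  have hq1' : 0 < -(q+1) := by linarith
  have h3 : (0:ℝ) < (3:ℝ) ^ (-q) := Real.rpow_pos_of_pos (by norm_num) _
  have hs2 : (0:ℝ) < Real.sqrt 2 := Real.sqrt_pos.2 (by norm_num)
  have h2 : (0:ℝ) < Real.sqrt 2 ^ (-(q+1)) := Real.rpow_pos_of_pos hs2 _
  refine ⟨(3:ℝ) ^ (-q) * Real.sqrt 2 ^ (-(q+1)) / (-(q+1)), by positivity, fun u₀ hu₀ => ?_⟩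
  have h2u₀ : 0 < 2 - u₀ := by linarith
  -- step 1 : pointwise comparison with (2-u)^q
  have step1 : ∫⁻ u in Set.Iic u₀, ENNReal.ofReal (Real.sqrt (1 + u ^ 2) ^ q)
      ≤ ∫⁻ u in Set.Iic u₀, ENNReal.ofReal ((3:ℝ) ^ (-q) * (2 - u) ^ q) := by
    refine setLIntegral_mono' measurableSet_Iic fun u hu => ?_
    have hu1 : u ≤ 1 := le_trans hu hu₀
    have h2u : 0 < 2 - u := by linarith
    have hA1 : (1:ℝ) ≤ Real.sqrt (1 + u ^ 2) := by
      nlinarith [Real.sq_sqrt (show (0:ℝ) ≤ 1 + u ^ 2 by positivity),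
        Real.sqrt_nonneg (1 + u ^ 2), sq_nonneg u]
    have hAu : -u ≤ Real.sqrt (1 + u ^ 2) := by
      have h1 : -u ≤ |u| := neg_le_abs u
      have h2' : |u| = Real.sqrt (u ^ 2) := (Real.sqrt_sq_eq_abs u).symm
      have h3' : Real.sqrt (u ^ 2) ≤ Real.sqrt (1 + u ^ 2) :=
        Real.sqrt_le_sqrt (by linarith)
      linarith
    have hbase : (2 - u) / 3 ≤ Real.sqrt (1 + u ^ 2) := by linarith
    have key : Real.sqrt (1 + u ^ 2) ^ q ≤ (3:ℝ) ^ (-q) * (2 - u) ^ q := by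
      have h := Real.rpow_le_rpow_of_nonpos (by positivity) hbase hq0
      calc Real.sqrt (1 + u ^ 2) ^ q ≤ ((2 - u) / 3) ^ q := h
        _ = (2 - u) ^ q / (3:ℝ) ^ q := Real.div_rpow (le_of_lt h2u) (by norm_num : (0:ℝ) ≤ 3) q
        _ = (3:ℝ) ^ (-q) * (2 - u) ^ q := by
            rw [Real.rpow_neg (by norm_num)]
            field_simp
    exact ENNReal.ofReal_le_ofReal key
  -- step 2 : pull out the constant
  have step2 : ∫⁻ u in Set.Iic u₀, ENNReal.ofReal ((3:ℝ) ^ (-q) * (2 - u) ^ q)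
      = ENNReal.ofReal ((3:ℝ) ^ (-q)) * ∫⁻ u in Set.Iic u₀, ENNReal.ofReal ((2 - u) ^ q) := by
    simp_rw [ENNReal.ofReal_mul (le_of_lt h3)]
    exact lintegral_const_mul _ (meas_ofReal_rpow 2 q)
  -- step 3 : change of variables u ↦ 2 - u
  have step3 : ∫⁻ u in Set.Iic u₀, ENNReal.ofReal ((2 - u) ^ q)
      = ∫⁻ y in Set.Ici (2 - u₀), ENNReal.ofReal (y ^ q) := by
    have hmp := MeasureTheory.Measure.measurePreserving_sub_left (volume : Measure ℝ) 2
    have hemb : MeasurableEmbedding (fun t : ℝ => 2 - t) :=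
      (MeasurableEquiv.subLeft (2:ℝ)).measurableEmbedding
    have h := hmp.setLIntegral_comp_preimage_emb hemb
      (fun y => ENNReal.ofReal (y ^ q)) (Set.Ici (2 - u₀))
    have hpre : (fun t : ℝ => 2 - t) ⁻¹' Set.Ici (2 - u₀) = Set.Iic u₀ := by
      ext u; simp only [Set.mem_preimage, Set.mem_Ici, Set.mem_Iic]
      constructor <;> intro h' <;> linarith
    rw [hpre] at h
    exact h
  -- step 4 : Ici = Ioi a.e., then compute
  have step4 : ∫⁻ y in Set.Ici (2 - u₀), ENNReal.ofReal (y ^ q)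
      = ENNReal.ofReal ((2 - u₀) ^ (q + 1) / (-(q + 1))) := by
    rw [← setLIntegral_congr (Ioi_ae_eq_Ici (a := 2 - u₀))]
    exact lint_Ioi_rpow hq h2u₀
  -- step 5 : compare (2-u₀)^(q+1) with sqrt(1+u₀²)^(q+1)
  have hA₀ : Real.sqrt (1 + u₀ ^ 2) / Real.sqrt 2 ≤ 2 - u₀ := by
    have h1 : Real.sqrt (1 + u₀ ^ 2) ≤ Real.sqrt 2 * (2 - u₀) := by
      have : (1 + u₀ ^ 2) ≤ 2 * (2 - u₀) ^ 2 := by nlinarith [sq_nonneg (u₀ - 1)]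
      calc Real.sqrt (1 + u₀ ^ 2) ≤ Real.sqrt (2 * (2 - u₀) ^ 2) := Real.sqrt_le_sqrt this
        _ = Real.sqrt 2 * Real.sqrt ((2 - u₀) ^ 2) := Real.sqrt_mul (by norm_num) _
        _ = Real.sqrt 2 * (2 - u₀) := by rw [Real.sqrt_sq (le_of_lt h2u₀)]
    rw [div_le_iff₀ hs2]
    linarith [h1, mul_comm (Real.sqrt 2) (2 - u₀)]
  have hA₀pos : 0 < Real.sqrt (1 + u₀ ^ 2) := Real.sqrt_pos.2 (by positivity)
  have step5 : (2 - u₀) ^ (q + 1)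
      ≤ Real.sqrt 2 ^ (-(q+1)) * Real.sqrt (1 + u₀ ^ 2) ^ (q + 1) := by
    calc (2 - u₀) ^ (q + 1) ≤ (Real.sqrt (1 + u₀ ^ 2) / Real.sqrt 2) ^ (q + 1) :=
          Real.rpow_le_rpow_of_nonpos (by positivity) hA₀ hq1
      _ = Real.sqrt (1 + u₀ ^ 2) ^ (q + 1) / Real.sqrt 2 ^ (q + 1) :=
          Real.div_rpow (le_of_lt hA₀pos) (le_of_lt hs2) (q+1)
      _ = Real.sqrt 2 ^ (-(q+1)) * Real.sqrt (1 + u₀ ^ 2) ^ (q + 1) := by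
          rw [Real.rpow_neg (le_of_lt hs2)]
          field_simp
  -- combine
  calc ∫⁻ u in Set.Iic u₀, ENNReal.ofReal (Real.sqrt (1 + u ^ 2) ^ q)
      ≤ ENNReal.ofReal ((3:ℝ) ^ (-q)) * ENNReal.ofReal ((2 - u₀) ^ (q + 1) / (-(q + 1))) := by
        rw [← step4, ← step3, ← step2]; exact step1
    _ ≤ ENNReal.ofReal ((3:ℝ) ^ (-q) * Real.sqrt 2 ^ (-(q+1)) / (-(q+1))
          * Real.sqrt (1 + u₀ ^ 2) ^ (q + 1)) := by
        rw [← ENNReal.ofReal_mul (le_of_lt h3)]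
        apply ENNReal.ofReal_le_ofReal
        have key : (3:ℝ) ^ (-q) * ((2 - u₀) ^ (q + 1) / -(q + 1))
            ≤ (3:ℝ) ^ (-q) * ((Real.sqrt 2 ^ (-(q+1)) * Real.sqrt (1 + u₀ ^ 2) ^ (q + 1))
              / -(q + 1)) := by
          gcongr
        calc (3:ℝ) ^ (-q) * ((2 - u₀) ^ (q + 1) / -(q + 1))
            ≤ (3:ℝ) ^ (-q) * ((Real.sqrt 2 ^ (-(q+1)) * Real.sqrt (1 + u₀ ^ 2) ^ (q + 1))
              / -(q + 1)) := key
          _ = 3 ^ (-q) * Real.sqrt 2 ^ (-(q+1)) / (-(q+1)) * Real.sqrt (1 + u₀ ^ 2) ^ (q + 1) := by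
              ring

/-- pointwise bound for basic quantities -/
lemma base_facts {t u u₀ : ℝ} (ht : 2 ≤ t) (hu : u ≤ u₀) (hu₀ : u₀ ≤ 1) :
    0 < t ∧ 0 < t + |u| ∧ t ≤ t + |u| ∧ (1:ℝ) ≤ Real.sqrt (1 + u ^ 2) ∧
    Real.sqrt (1 + u ^ 2) ≤ t + |u| ∧
    Real.sqrt (1 + u₀ ^ 2) / Real.sqrt 2 ≤ Real.sqrt (1 + u ^ 2) := by
  have ht0 : (0:ℝ) < t := by linarith
  have habs : 0 ≤ |u| := abs_nonneg u
  have hA2 : Real.sqrt (1 + u ^ 2) ^ 2 = 1 + u ^ 2 := Real.sq_sqrt (by positivity)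
  have hApos : 0 < Real.sqrt (1 + u ^ 2) := Real.sqrt_pos.2 (by positivity)
  have hA₀2 : Real.sqrt (1 + u₀ ^ 2) ^ 2 = 1 + u₀ ^ 2 := Real.sq_sqrt (by positivity)
  have hA₀pos : 0 < Real.sqrt (1 + u₀ ^ 2) := Real.sqrt_pos.2 (by positivity)
  have hs2 : (0:ℝ) < Real.sqrt 2 := Real.sqrt_pos.2 (by norm_num)
  have hs22 : Real.sqrt 2 ^ 2 = 2 := Real.sq_sqrt (by norm_num)
  have hA1 : (1:ℝ) ≤ Real.sqrt (1 + u ^ 2) := by nlinarith [sq_nonneg u]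
  have habs2 : |u| ^ 2 = u ^ 2 := sq_abs u
  refine ⟨ht0, by linarith, by linarith, hA1, ?_, ?_⟩
  · -- sqrt(1+u²) ≤ 2 + |u| ≤ t + |u|
    have : Real.sqrt (1 + u ^ 2) ≤ 2 + |u| := by nlinarith
    linarith
  · -- A₀ ≤ √2 A
    rw [div_le_iff₀ hs2]
    have key : 1 + u₀ ^ 2 ≤ 2 * (1 + u ^ 2) := by
      rcases le_or_gt u₀ 0 with h | h
      · have : u₀ ^ 2 ≤ u ^ 2 := by nlinarith
        nlinarith
      · nlinarith
    nlinarith [mul_pos hApos hs2]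

/-- the weight bound (Lemma W) -/
lemma weight_bound {σ2 B x γ : ℝ} (hx0 : x ≤ 0) (hσx : 2 * σ2 + max (-B) 0 ≤ x)
    (hγ : γ = 2 * σ2 - B - x) {t u u₀ : ℝ} (ht : 2 ≤ t) (hu : u ≤ u₀) (hu₀ : u₀ ≤ 1) :
    (t + |u|) ^ (2 * σ2) * Real.sqrt (1 + u ^ 2) ^ (-B)
      ≤ Real.sqrt 2 ^ (-γ) * t ^ x * Real.sqrt (1 + u₀ ^ 2) ^ γ := by
  obtain ⟨ht0, hr0, htr, hA1, hAr, hcA⟩ := base_facts ht hu hu₀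
  set r := t + |u| with hrdef
  set A := Real.sqrt (1 + u ^ 2) with hAdef
  set A₀ := Real.sqrt (1 + u₀ ^ 2) with hA₀def
  have hs2 : (0:ℝ) < Real.sqrt 2 := Real.sqrt_pos.2 (by norm_num)
  have hA₀pos : 0 < A₀ := Real.sqrt_pos.2 (by positivity)
  have hApos : 0 < A := by linarith
  have hc : 0 < A₀ / Real.sqrt 2 := div_pos hA₀pos hs2
  have hcr : A₀ / Real.sqrt 2 ≤ r := le_trans hcA (le_trans hAr le_rfl)
  have hrx : r ^ x ≤ t ^ x := Real.rpow_le_rpow_of_nonpos ht0 htr hx0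
  have final : ∀ e : ℝ, (A₀ / Real.sqrt 2) ^ e = Real.sqrt 2 ^ (-e) * A₀ ^ e := by
    intro e
    rw [Real.div_rpow (le_of_lt hA₀pos) (le_of_lt hs2) e, Real.rpow_neg (le_of_lt hs2)]
    field_simp
  have hend : t ^ x * (A₀ / Real.sqrt 2) ^ γ = Real.sqrt 2 ^ (-γ) * t ^ x * A₀ ^ γ := by
    rw [final γ]; ring
  rcases le_or_gt 0 B with hB | hB
  · -- B ≥ 0 : A^(-B) ≤ (A₀/√2)^(-B)
    have hmax : max (-B) 0 = 0 := max_eq_right (by linarith)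
    have hx2 : 2 * σ2 - x ≤ 0 := by rw [hmax] at hσx; linarith
    have e1 : A ^ (-B) ≤ (A₀ / Real.sqrt 2) ^ (-B) :=
      Real.rpow_le_rpow_of_nonpos hc hcA (by linarith)
    have e4 : r ^ (2 * σ2 - x) ≤ (A₀ / Real.sqrt 2) ^ (2 * σ2 - x) :=
      Real.rpow_le_rpow_of_nonpos hc hcr hx2
    calc r ^ (2 * σ2) * A ^ (-B)
        = (r ^ x * r ^ (2 * σ2 - x)) * A ^ (-B) := by
          rw [← Real.rpow_add hr0, show x + (2 * σ2 - x) = 2 * σ2 by ring]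
      _ ≤ (t ^ x * (A₀ / Real.sqrt 2) ^ (2 * σ2 - x)) * (A₀ / Real.sqrt 2) ^ (-B) := by
          apply mul_le_mul _ e1 (Real.rpow_nonneg (le_of_lt hApos) _) _
          · exact mul_le_mul hrx e4 (Real.rpow_nonneg (le_of_lt hr0) _)
              (Real.rpow_nonneg (le_of_lt ht0) _)
          · exact mul_nonneg (Real.rpow_nonneg (le_of_lt ht0) _)
              (Real.rpow_nonneg (le_of_lt hc) _)
      _ = t ^ x * (A₀ / Real.sqrt 2) ^ γ := by
          rw [mul_assoc, ← Real.rpow_add hc, show 2 * σ2 - x + -B = γ by rw [hγ]; ring]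
      _ = Real.sqrt 2 ^ (-γ) * t ^ x * A₀ ^ γ := hend
  · -- B < 0 : A^(-B) ≤ r^(-B)
    have hmax : max (-B) 0 = -B := max_eq_left (by linarith)
    have hγ0 : 2 * σ2 - B - x ≤ 0 := by rw [hmax] at hσx; linarith
    have e1 : A ^ (-B) ≤ r ^ (-B) :=
      Real.rpow_le_rpow (le_of_lt hApos) hAr (by linarith)
    have e4 : r ^ (2 * σ2 - B - x) ≤ (A₀ / Real.sqrt 2) ^ (2 * σ2 - B - x) :=
      Real.rpow_le_rpow_of_nonpos hc hcr hγ0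
    calc r ^ (2 * σ2) * A ^ (-B)
        ≤ r ^ (2 * σ2) * r ^ (-B) :=
          mul_le_mul_of_nonneg_left e1 (Real.rpow_nonneg (le_of_lt hr0) _)
      _ = r ^ x * r ^ (2 * σ2 - B - x) := by
          rw [← Real.rpow_add hr0, ← Real.rpow_add hr0,
            show x + (2 * σ2 - B - x) = 2 * σ2 + -B by ring]
      _ ≤ t ^ x * (A₀ / Real.sqrt 2) ^ γ := by
          rw [hγ]
          exact mul_le_mul hrx e4 (Real.rpow_nonneg (le_of_lt hr0) _)
            (Real.rpow_nonneg (le_of_lt ht0) _)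
      _ = Real.sqrt 2 ^ (-γ) * t ^ x * A₀ ^ γ := hend

/-- the square identity for the AM–GM step -/
lemma sq_eq {r A A₀ : ℝ} (hr : 0 < r) (hA : 0 < A) (hA₀ : 0 < A₀)
    (w τ b κ σ2 p₁ p₂ : ℝ) (hw : w + w = p₁ + p₂ + 2 * σ2) :
    (r ^ w * A ^ (-τ)) ^ 2
      = (A ^ (b - 2 * τ) * A₀ ^ κ * r ^ p₁) * (r ^ (2 * σ2) * A ^ (-b) * A₀ ^ (-κ) * r ^ p₂) := by
  have hL : (r ^ w * A ^ (-τ)) ^ 2 = r ^ (w + w) * A ^ (-τ + -τ) := by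
    rw [Real.rpow_add hr, Real.rpow_add hA]; ring
  have hR : (A ^ (b - 2 * τ) * A₀ ^ κ * r ^ p₁) * (r ^ (2 * σ2) * A ^ (-b) * A₀ ^ (-κ) * r ^ p₂)
      = r ^ (p₁ + p₂ + 2 * σ2) * A ^ (b - 2 * τ + -b) * A₀ ^ (κ + -κ) := by
    rw [Real.rpow_add hr, Real.rpow_add hr, Real.rpow_add hA, Real.rpow_add hA₀]; ring
  rw [hL, hR, hw, show κ + -κ = 0 by ring, Real.rpow_zero,
    show b - 2 * τ + -b = -τ + -τ by ring, mul_one]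

set_option maxHeartbeats 1000000 in
/-- Flat model of the exterior-region mixed nonlinear error estimate
(case (2) of the Appendix theorem). With `⟨u⟩ = √(1+u²)`, `r(t,u) = t+|u|`:
if for every `u ≤ u₀` the null-cone flux of `f` satisfies
`∫_2^T r^{p₁} f² dt ≤ ε²⟨u⟩^{p₁−s}`, and for every `t ∈ [2,T]` the hypersurface
flux of `g` satisfies `∫_{−∞}^{u₀} r^{p₂} g² du ≤ ε²⟨u₀⟩^{p₂−s}`, then
`∫_{−∞}^{u₀} ∫_2^T r^{p−(ℓ+1)/2} ⟨u⟩^{−(s−ℓ)/2} f g dt du ≤ C ε² ⟨u₀⟩^{p−s}`,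
with `C` depending only on `s, p, p₁, p₂, ℓ`, provided `2p < p₁+p₂+ℓ` and
`2p+1 < p₁+p₂+s`. -/
theorem exterior_error_estimate_EF (s p p₁ p₂ ℓ : ℝ) (hs1 : 1 < s) (hs2 : s ≤ 2)
    (hp : p ≤ s) (hp₁ : p₁ ≤ s) (hp₂ : p₂ ≤ s) (hℓ : ℓ ≤ s)
    (hlt : 2 * p < p₁ + p₂ + ℓ) (hlt' : 2 * p + 1 < p₁ + p₂ + s) :
    ∃ C : ℝ, 0 < C ∧
      ∀ (ε T u₀ : ℝ), 0 ≤ ε → 2 ≤ T → u₀ ≤ 1 →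
      ∀ f g : ℝ → ℝ → ℝ,
        Measurable (Function.uncurry f) → Measurable (Function.uncurry g) →
        (∀ t ∈ Set.Icc (2:ℝ) T, ∀ u ≤ u₀, 0 ≤ f t u) →
        (∀ t ∈ Set.Icc (2:ℝ) T, ∀ u ≤ u₀, 0 ≤ g t u) →
        (∀ u ≤ u₀, ∫⁻ t in Set.Icc (2:ℝ) T,
            ENNReal.ofReal ((t + |u|) ^ p₁ * f t u ^ 2)
          ≤ ENNReal.ofReal (ε ^ 2 * Real.sqrt (1 + u ^ 2) ^ (p₁ - s))) →
        (∀ t ∈ Set.Icc (2:ℝ) T, ∫⁻ u in Set.Iic u₀,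
            ENNReal.ofReal ((t + |u|) ^ p₂ * g t u ^ 2)
          ≤ ENNReal.ofReal (ε ^ 2 * Real.sqrt (1 + u₀ ^ 2) ^ (p₂ - s))) →
        ∫⁻ u in Set.Iic u₀, ∫⁻ t in Set.Icc (2:ℝ) T,
            ENNReal.ofReal ((t + |u|) ^ (p - (ℓ + 1) / 2)
              * Real.sqrt (1 + u ^ 2) ^ (-((s - ℓ) / 2)) * f t u * g t u)
          ≤ ENNReal.ofReal (C * ε ^ 2 * Real.sqrt (1 + u₀ ^ 2) ^ (p - s)) := by
  set τ := (s - ℓ) / 2 with hτdef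
  set σ2 := p - (p₁ + p₂ + ℓ + 1) / 2 with hσdef
  set B := σ2 + τ + (s - p₁) / 2 with hBdef
  set x := (max (-s) (2 * σ2 + max (-B) 0) - 1) / 2 with hxdef
  set γ := 2 * σ2 - B - x with hγdef
  set κ := p₂ + γ - p with hκdef
  set q := B - 2 * τ + p₁ - s with hqdef
  clear_value τ σ2 B x γ κ q
  have hσ2lt : 2 * σ2 < -1 := by rw [hσdef]; linarith
  have hστ : 2 * σ2 < 2 * τ - 2 := by rw [hσdef, hτdef]; linarith
  have hBgt : 2 * σ2 + 1 < B := by rw [hBdef]; linarith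
  have hmax1 : max (-B) 0 < -1 - 2 * σ2 := max_lt (by linarith) (by linarith)
  have hmaxL : max (-s) (2 * σ2 + max (-B) 0) < -1 :=
    max_lt (by linarith) (by linarith)
  have hxlt : x < -1 := by rw [hxdef]; linarith
  have hx0 : x ≤ 0 := by linarith
  have hxs : -s ≤ x := by
    rw [hxdef]
    have h := le_max_left (-s) (2 * σ2 + max (-B) 0)
    linarith
  have hσx : 2 * σ2 + max (-B) 0 ≤ x := by
    rw [hxdef]
    have h := le_max_right (-s) (2 * σ2 + max (-B) 0)
    linarith
  have hqlt : q < -1 := by rw [hqdef, hBdef]; linarith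
  have hbud1 : κ + (q + 1) ≤ p - s := by
    rw [hκdef, hγdef, hqdef, hBdef, hσdef, hτdef]
    have := hxs
    linarith
  have hbud2 : γ - κ + (p₂ - s) = p - s := by rw [hκdef]; ring
  obtain ⟨C₁, hC₁pos, hC₁⟩ := u_int q hqlt
  obtain ⟨C₂, hC₂pos, hC₂⟩ := t_int x hxlt
  have hs2pos : (0:ℝ) < Real.sqrt 2 := Real.sqrt_pos.2 (by norm_num)
  set CW := Real.sqrt 2 ^ (-γ) with hCWdef
  have hCWpos : 0 < CW := Real.rpow_pos_of_pos hs2pos _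
  refine ⟨C₁ / 2 + CW * C₂ / 2, by positivity, ?_⟩
  intro ε T u₀ hε hT hu₀ f g hmf hmg hf0 hg0 hFf hFg
  have hA₀pos : 0 < Real.sqrt (1 + u₀ ^ 2) := Real.sqrt_pos.2 (by positivity)
  have hA₀1 : 1 ≤ Real.sqrt (1 + u₀ ^ 2) := by
    nlinarith [Real.sq_sqrt (show (0:ℝ) ≤ 1 + u₀ ^ 2 by positivity),
      Real.sqrt_nonneg (1 + u₀ ^ 2), sq_nonneg u₀]
  set A₀ := Real.sqrt (1 + u₀ ^ 2) with hA₀def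
  -- measurability helpers
  have hmf' : Measurable fun z : ℝ × ℝ => f z.2 z.1 := hmf.comp measurable_swap
  have hmg' : Measurable fun z : ℝ × ℝ => g z.2 z.1 := hmg.comp measurable_swap
  have hm1 : Measurable (Function.uncurry fun u t : ℝ =>
      ENNReal.ofReal (Real.sqrt (1 + u ^ 2) ^ (B - 2 * τ) * A₀ ^ κ
        * ((t + |u|) ^ p₁ * f t u ^ 2) / 2)) := by fun_prop
  have hm2 : Measurable (Function.uncurry fun u t : ℝ =>
      ENNReal.ofReal ((t + |u|) ^ (2 * σ2) * Real.sqrt (1 + u ^ 2) ^ (-B) * A₀ ^ (-κ)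
        * ((t + |u|) ^ p₂ * g t u ^ 2) / 2)) := by fun_prop
  -- Step 1 : pointwise AM-GM and splitting
  have step1 : ∫⁻ u in Set.Iic u₀, ∫⁻ t in Set.Icc (2:ℝ) T,
      ENNReal.ofReal ((t + |u|) ^ (p - (ℓ + 1) / 2)
        * Real.sqrt (1 + u ^ 2) ^ (-τ) * f t u * g t u)
      ≤ ∫⁻ u in Set.Iic u₀, ∫⁻ t in Set.Icc (2:ℝ) T,
        (ENNReal.ofReal (Real.sqrt (1 + u ^ 2) ^ (B - 2 * τ) * A₀ ^ κ
            * ((t + |u|) ^ p₁ * f t u ^ 2) / 2)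
          + ENNReal.ofReal ((t + |u|) ^ (2 * σ2) * Real.sqrt (1 + u ^ 2) ^ (-B) * A₀ ^ (-κ)
            * ((t + |u|) ^ p₂ * g t u ^ 2) / 2)) := by
    refine setLIntegral_mono' measurableSet_Iic fun u hu => ?_
    refine setLIntegral_mono' measurableSet_Icc fun t ht => ?_
    obtain ⟨ht0, hr0, htr, hA1, hAr, hcA⟩ := base_facts ht.1 hu hu₀
    have hApos : (0:ℝ) < Real.sqrt (1 + u ^ 2) := by linarith
    have hF := hf0 t ht u hu
    have hG := hg0 t ht u hu
    have hsq := sq_eq hr0 hApos hA₀pos (p - (ℓ + 1) / 2) τ B κ σ2 p₁ p₂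
      (by rw [hσdef]; ring)
    have hX : (0:ℝ) ≤ Real.sqrt (1 + u ^ 2) ^ (B - 2 * τ) * A₀ ^ κ * (t + |u|) ^ p₁ := by
      positivity
    have hY : (0:ℝ) ≤ (t + |u|) ^ (2 * σ2) * Real.sqrt (1 + u ^ 2) ^ (-B) * A₀ ^ (-κ)
        * (t + |u|) ^ p₂ := by positivity
    have hW0 : (0:ℝ) ≤ (t + |u|) ^ (p - (ℓ + 1) / 2) * Real.sqrt (1 + u ^ 2) ^ (-τ) := by
      positivity
    have key := amgm_aux hX hY hF hG hW0 hsq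
    calc ENNReal.ofReal ((t + |u|) ^ (p - (ℓ + 1) / 2)
          * Real.sqrt (1 + u ^ 2) ^ (-τ) * f t u * g t u)
        ≤ ENNReal.ofReal (Real.sqrt (1 + u ^ 2) ^ (B - 2 * τ) * A₀ ^ κ
            * ((t + |u|) ^ p₁ * f t u ^ 2) / 2
          + (t + |u|) ^ (2 * σ2) * Real.sqrt (1 + u ^ 2) ^ (-B) * A₀ ^ (-κ)
            * ((t + |u|) ^ p₂ * g t u ^ 2) / 2) := by
          exact ENNReal.ofReal_le_ofReal (le_trans key (le_of_eq (by ring)))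
      _ ≤ _ := ENNReal.ofReal_add_le
  -- Step 2 : split the double integral of the sum
  have step2 : ∫⁻ u in Set.Iic u₀, ∫⁻ t in Set.Icc (2:ℝ) T,
      (ENNReal.ofReal (Real.sqrt (1 + u ^ 2) ^ (B - 2 * τ) * A₀ ^ κ
          * ((t + |u|) ^ p₁ * f t u ^ 2) / 2)
        + ENNReal.ofReal ((t + |u|) ^ (2 * σ2) * Real.sqrt (1 + u ^ 2) ^ (-B) * A₀ ^ (-κ)
          * ((t + |u|) ^ p₂ * g t u ^ 2) / 2))
      = (∫⁻ u in Set.Iic u₀, ∫⁻ t in Set.Icc (2:ℝ) T,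
          ENNReal.ofReal (Real.sqrt (1 + u ^ 2) ^ (B - 2 * τ) * A₀ ^ κ
            * ((t + |u|) ^ p₁ * f t u ^ 2) / 2))
        + ∫⁻ u in Set.Iic u₀, ∫⁻ t in Set.Icc (2:ℝ) T,
          ENNReal.ofReal ((t + |u|) ^ (2 * σ2) * Real.sqrt (1 + u ^ 2) ^ (-B) * A₀ ^ (-κ)
            * ((t + |u|) ^ p₂ * g t u ^ 2) / 2) := by
    have inner : ∀ u : ℝ, ∫⁻ t in Set.Icc (2:ℝ) T,
        (ENNReal.ofReal (Real.sqrt (1 + u ^ 2) ^ (B - 2 * τ) * A₀ ^ κ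
            * ((t + |u|) ^ p₁ * f t u ^ 2) / 2)
          + ENNReal.ofReal ((t + |u|) ^ (2 * σ2) * Real.sqrt (1 + u ^ 2) ^ (-B) * A₀ ^ (-κ)
            * ((t + |u|) ^ p₂ * g t u ^ 2) / 2))
        = (∫⁻ t in Set.Icc (2:ℝ) T,
            ENNReal.ofReal (Real.sqrt (1 + u ^ 2) ^ (B - 2 * τ) * A₀ ^ κ
              * ((t + |u|) ^ p₁ * f t u ^ 2) / 2))
          + ∫⁻ t in Set.Icc (2:ℝ) T,
            ENNReal.ofReal ((t + |u|) ^ (2 * σ2) * Real.sqrt (1 + u ^ 2) ^ (-B) * A₀ ^ (-κ)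
              * ((t + |u|) ^ p₂ * g t u ^ 2) / 2) := by
      intro u
      exact lintegral_add_left (hm1.comp (measurable_const.prodMk measurable_id)) _
    rw [lintegral_congr inner]
    exact lintegral_add_left hm1.lintegral_prod_right _
  -- Step 3 : the f-term
  have step3 : (∫⁻ u in Set.Iic u₀, ∫⁻ t in Set.Icc (2:ℝ) T,
        ENNReal.ofReal (Real.sqrt (1 + u ^ 2) ^ (B - 2 * τ) * A₀ ^ κ
          * ((t + |u|) ^ p₁ * f t u ^ 2) / 2))
      ≤ ENNReal.ofReal (C₁ / 2 * ε ^ 2 * A₀ ^ (p - s)) := by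
    have hc2 : ∀ u : ℝ, (0:ℝ) ≤ Real.sqrt (1 + u ^ 2) ^ (B - 2 * τ) * A₀ ^ κ / 2 := by
      intro u; positivity
    have main : (∫⁻ u in Set.Iic u₀, ∫⁻ t in Set.Icc (2:ℝ) T,
          ENNReal.ofReal (Real.sqrt (1 + u ^ 2) ^ (B - 2 * τ) * A₀ ^ κ
            * ((t + |u|) ^ p₁ * f t u ^ 2) / 2))
        ≤ ∫⁻ u in Set.Iic u₀,
            ENNReal.ofReal ((ε ^ 2 * A₀ ^ κ / 2) * Real.sqrt (1 + u ^ 2) ^ q) := by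
      refine setLIntegral_mono' measurableSet_Iic fun u hu => ?_
      have hApos : (0:ℝ) < Real.sqrt (1 + u ^ 2) := Real.sqrt_pos.2 (by positivity)
      have hmt : Measurable fun t : ℝ => ENNReal.ofReal ((t + |u|) ^ p₁ * f t u ^ 2) := by
        have h : Measurable fun t : ℝ => f t u :=
          hmf.comp (measurable_id.prodMk measurable_const)
        fun_prop
      calc ∫⁻ t in Set.Icc (2:ℝ) T,
            ENNReal.ofReal (Real.sqrt (1 + u ^ 2) ^ (B - 2 * τ) * A₀ ^ κ
              * ((t + |u|) ^ p₁ * f t u ^ 2) / 2)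
          = ENNReal.ofReal (Real.sqrt (1 + u ^ 2) ^ (B - 2 * τ) * A₀ ^ κ / 2)
              * ∫⁻ t in Set.Icc (2:ℝ) T, ENNReal.ofReal ((t + |u|) ^ p₁ * f t u ^ 2) := by
            rw [← lintegral_const_mul _ hmt]
            refine lintegral_congr fun t => ?_
            rw [← ENNReal.ofReal_mul (hc2 u)]
            congr 1
            ring
        _ ≤ ENNReal.ofReal (Real.sqrt (1 + u ^ 2) ^ (B - 2 * τ) * A₀ ^ κ / 2)
              * ENNReal.ofReal (ε ^ 2 * Real.sqrt (1 + u ^ 2) ^ (p₁ - s)) :=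
            mul_le_mul_right (hFf u hu) _
        _ = ENNReal.ofReal (Real.sqrt (1 + u ^ 2) ^ (B - 2 * τ) * A₀ ^ κ / 2
              * (ε ^ 2 * Real.sqrt (1 + u ^ 2) ^ (p₁ - s))) :=
            (ENNReal.ofReal_mul (hc2 u)).symm
        _ = ENNReal.ofReal ((ε ^ 2 * A₀ ^ κ / 2) * Real.sqrt (1 + u ^ 2) ^ q) := by
            congr 1
            have he : Real.sqrt (1 + u ^ 2) ^ (B - 2 * τ) * Real.sqrt (1 + u ^ 2) ^ (p₁ - s)
                = Real.sqrt (1 + u ^ 2) ^ q := by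
              rw [← Real.rpow_add hApos, hqdef]
              congr 1
              ring
            calc Real.sqrt (1 + u ^ 2) ^ (B - 2 * τ) * A₀ ^ κ / 2
                  * (ε ^ 2 * Real.sqrt (1 + u ^ 2) ^ (p₁ - s))
                = (ε ^ 2 * A₀ ^ κ / 2) * (Real.sqrt (1 + u ^ 2) ^ (B - 2 * τ)
                    * Real.sqrt (1 + u ^ 2) ^ (p₁ - s)) := by ring
              _ = (ε ^ 2 * A₀ ^ κ / 2) * Real.sqrt (1 + u ^ 2) ^ q := by rw [he]
    refine le_trans main ?_
    have hcnn : (0:ℝ) ≤ ε ^ 2 * A₀ ^ κ / 2 := by positivity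
    calc ∫⁻ u in Set.Iic u₀,
          ENNReal.ofReal ((ε ^ 2 * A₀ ^ κ / 2) * Real.sqrt (1 + u ^ 2) ^ q)
        = ENNReal.ofReal (ε ^ 2 * A₀ ^ κ / 2)
            * ∫⁻ u in Set.Iic u₀, ENNReal.ofReal (Real.sqrt (1 + u ^ 2) ^ q) := by
          rw [← lintegral_const_mul _
            (show Measurable fun u : ℝ => ENNReal.ofReal (Real.sqrt (1 + u ^ 2) ^ q)
              by fun_prop)]
          exact lintegral_congr fun u => by rw [← ENNReal.ofReal_mul hcnn]
      _ ≤ ENNReal.ofReal (ε ^ 2 * A₀ ^ κ / 2) * ENNReal.ofReal (C₁ * A₀ ^ (q + 1)) :=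
          mul_le_mul_right (hC₁ u₀ hu₀) _
      _ = ENNReal.ofReal ((ε ^ 2 * A₀ ^ κ / 2) * (C₁ * A₀ ^ (q + 1))) :=
          (ENNReal.ofReal_mul hcnn).symm
      _ ≤ ENNReal.ofReal (C₁ / 2 * ε ^ 2 * A₀ ^ (p - s)) := by
          apply ENNReal.ofReal_le_ofReal
          have hexp : A₀ ^ κ * A₀ ^ (q + 1) = A₀ ^ (κ + (q + 1)) :=
            (Real.rpow_add hA₀pos _ _).symm
          have hle : A₀ ^ (κ + (q + 1)) ≤ A₀ ^ (p - s) :=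
            Real.rpow_le_rpow_of_exponent_le hA₀1 hbud1
          calc ε ^ 2 * A₀ ^ κ / 2 * (C₁ * A₀ ^ (q + 1))
              = (C₁ / 2 * ε ^ 2) * (A₀ ^ κ * A₀ ^ (q + 1)) := by ring
            _ = (C₁ / 2 * ε ^ 2) * A₀ ^ (κ + (q + 1)) := by rw [hexp]
            _ ≤ (C₁ / 2 * ε ^ 2) * A₀ ^ (p - s) :=
                mul_le_mul_of_nonneg_left hle (by positivity)
            _ = C₁ / 2 * ε ^ 2 * A₀ ^ (p - s) := by ring
  -- Step 4 : the g-term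
  have step4 : (∫⁻ u in Set.Iic u₀, ∫⁻ t in Set.Icc (2:ℝ) T,
        ENNReal.ofReal ((t + |u|) ^ (2 * σ2) * Real.sqrt (1 + u ^ 2) ^ (-B) * A₀ ^ (-κ)
          * ((t + |u|) ^ p₂ * g t u ^ 2) / 2))
      ≤ ENNReal.ofReal (CW * C₂ / 2 * ε ^ 2 * A₀ ^ (p - s)) := by
    have hswap : (∫⁻ u in Set.Iic u₀, ∫⁻ t in Set.Icc (2:ℝ) T,
          ENNReal.ofReal ((t + |u|) ^ (2 * σ2) * Real.sqrt (1 + u ^ 2) ^ (-B) * A₀ ^ (-κ)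
            * ((t + |u|) ^ p₂ * g t u ^ 2) / 2))
        = ∫⁻ t in Set.Icc (2:ℝ) T, ∫⁻ u in Set.Iic u₀,
            ENNReal.ofReal ((t + |u|) ^ (2 * σ2) * Real.sqrt (1 + u ^ 2) ^ (-B) * A₀ ^ (-κ)
              * ((t + |u|) ^ p₂ * g t u ^ 2) / 2) :=
      lintegral_lintegral_swap hm2.aemeasurable
    rw [hswap]
    have hDnn : (0:ℝ) ≤ CW / 2 * ε ^ 2 * A₀ ^ (p - s) := by positivity
    calc ∫⁻ t in Set.Icc (2:ℝ) T, ∫⁻ u in Set.Iic u₀,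
          ENNReal.ofReal ((t + |u|) ^ (2 * σ2) * Real.sqrt (1 + u ^ 2) ^ (-B) * A₀ ^ (-κ)
            * ((t + |u|) ^ p₂ * g t u ^ 2) / 2)
        ≤ ∫⁻ t in Set.Icc (2:ℝ) T,
            ENNReal.ofReal ((CW / 2 * ε ^ 2 * A₀ ^ (p - s)) * t ^ x) := by
          refine setLIntegral_mono' measurableSet_Icc fun t ht => ?_
          have ht0 : (0:ℝ) < t := by linarith [ht.1]
          have htx : (0:ℝ) ≤ t ^ x := Real.rpow_nonneg (le_of_lt ht0) x
          have hcnn : (0:ℝ) ≤ CW * t ^ x * A₀ ^ (γ - κ) / 2 := by positivity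
          have hmu : Measurable fun u : ℝ => ENNReal.ofReal ((t + |u|) ^ p₂ * g t u ^ 2) := by
            have h : Measurable fun u : ℝ => g t u :=
              hmg.comp (measurable_const.prodMk measurable_id)
            fun_prop
          calc ∫⁻ u in Set.Iic u₀,
                ENNReal.ofReal ((t + |u|) ^ (2 * σ2) * Real.sqrt (1 + u ^ 2) ^ (-B) * A₀ ^ (-κ)
                  * ((t + |u|) ^ p₂ * g t u ^ 2) / 2)
              ≤ ∫⁻ u in Set.Iic u₀,
                  ENNReal.ofReal ((CW * t ^ x * A₀ ^ (γ - κ) / 2)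
                    * ((t + |u|) ^ p₂ * g t u ^ 2)) := by
                refine setLIntegral_mono' measurableSet_Iic fun u hu => ?_
                apply ENNReal.ofReal_le_ofReal
                have hwb := weight_bound hx0 hσx hγdef ht.1 hu hu₀
                have hA₀κ : (0:ℝ) ≤ A₀ ^ (-κ) := Real.rpow_nonneg (le_of_lt hA₀pos) _
                have h2 : (t + |u|) ^ (2 * σ2) * Real.sqrt (1 + u ^ 2) ^ (-B) * A₀ ^ (-κ)
                    ≤ CW * t ^ x * A₀ ^ (γ - κ) := by
                  calc (t + |u|) ^ (2 * σ2) * Real.sqrt (1 + u ^ 2) ^ (-B) * A₀ ^ (-κ)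
                      ≤ Real.sqrt 2 ^ (-γ) * t ^ x * A₀ ^ γ * A₀ ^ (-κ) :=
                        mul_le_mul_of_nonneg_right hwb hA₀κ
                    _ = CW * t ^ x * (A₀ ^ γ * A₀ ^ (-κ)) := by rw [hCWdef]; ring
                    _ = CW * t ^ x * A₀ ^ (γ - κ) := by
                        rw [← Real.rpow_add hA₀pos, sub_eq_add_neg]
                have hXnn : (0:ℝ) ≤ (t + |u|) ^ p₂ * g t u ^ 2 := by positivity
                have hmul := mul_le_mul_of_nonneg_right h2 hXnn
                linarith
            _ = ENNReal.ofReal (CW * t ^ x * A₀ ^ (γ - κ) / 2)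
                  * ∫⁻ u in Set.Iic u₀, ENNReal.ofReal ((t + |u|) ^ p₂ * g t u ^ 2) := by
                rw [← lintegral_const_mul _ hmu]
                exact lintegral_congr fun u => by rw [← ENNReal.ofReal_mul hcnn]
            _ ≤ ENNReal.ofReal (CW * t ^ x * A₀ ^ (γ - κ) / 2)
                  * ENNReal.ofReal (ε ^ 2 * A₀ ^ (p₂ - s)) :=
                mul_le_mul_right (hFg t ht) _
            _ = ENNReal.ofReal ((CW * t ^ x * A₀ ^ (γ - κ) / 2) * (ε ^ 2 * A₀ ^ (p₂ - s))) :=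
                (ENNReal.ofReal_mul hcnn).symm
            _ = ENNReal.ofReal ((CW / 2 * ε ^ 2 * A₀ ^ (p - s)) * t ^ x) := by
                congr 1
                have hpr : A₀ ^ (γ - κ) * A₀ ^ (p₂ - s) = A₀ ^ (p - s) := by
                  rw [← Real.rpow_add hA₀pos]
                  rw [show γ - κ + (p₂ - s) = p - s from hbud2]
                calc CW * t ^ x * A₀ ^ (γ - κ) / 2 * (ε ^ 2 * A₀ ^ (p₂ - s))
                    = (CW / 2 * ε ^ 2 * t ^ x) * (A₀ ^ (γ - κ) * A₀ ^ (p₂ - s)) := by ring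
                  _ = (CW / 2 * ε ^ 2 * t ^ x) * A₀ ^ (p - s) := by rw [hpr]
                  _ = (CW / 2 * ε ^ 2 * A₀ ^ (p - s)) * t ^ x := by ring
      _ = ENNReal.ofReal (CW / 2 * ε ^ 2 * A₀ ^ (p - s))
            * ∫⁻ t in Set.Icc (2:ℝ) T, ENNReal.ofReal (t ^ x) := by
          rw [← lintegral_const_mul _
            (show Measurable fun t : ℝ => ENNReal.ofReal (t ^ x) by fun_prop)]
          exact lintegral_congr fun t => by rw [← ENNReal.ofReal_mul hDnn]
      _ ≤ ENNReal.ofReal (CW / 2 * ε ^ 2 * A₀ ^ (p - s)) * ENNReal.ofReal C₂ :=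
          mul_le_mul_right (hC₂ T) _
      _ = ENNReal.ofReal (CW / 2 * ε ^ 2 * A₀ ^ (p - s) * C₂) :=
          (ENNReal.ofReal_mul hDnn).symm
      _ = ENNReal.ofReal (CW * C₂ / 2 * ε ^ 2 * A₀ ^ (p - s)) := by
          congr 1
          ring
  -- Final assembly
  calc ∫⁻ u in Set.Iic u₀, ∫⁻ t in Set.Icc (2:ℝ) T,
        ENNReal.ofReal ((t + |u|) ^ (p - (ℓ + 1) / 2)
          * Real.sqrt (1 + u ^ 2) ^ (-τ) * f t u * g t u)
      ≤ _ := step1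
    _ = _ := step2
    _ ≤ ENNReal.ofReal (C₁ / 2 * ε ^ 2 * A₀ ^ (p - s))
          + ENNReal.ofReal (CW * C₂ / 2 * ε ^ 2 * A₀ ^ (p - s)) := add_le_add step3 step4
    _ = ENNReal.ofReal ((C₁ / 2 + CW * C₂ / 2) * ε ^ 2 * A₀ ^ (p - s)) := by
        rw [← ENNReal.ofReal_add (by positivity) (by positivity)]
        congr 1
        ring
end

section
/- Let s ∈ (1,2], let p₁ ∈ [0,s], and let p ∈ ℝ with p₁/2 ≤ p ≤ s and 2p + 1 < p₁ + 2s. Let ε ≥ 0 and 1 ≤ u₁ ≤ u₂. Set D := {(t,u) ∈ ℝ² : u₁ ≤ u ≤ u₂ and u ≤ t ≤ 2u} and r(t,u) := t − u. Let F : D → [0,∞) be measurable with ∫_{{u : (t,u)∈D}} r(t,u)^{p₁} F(t,u)² du ≤ ε² u₁^{p₁−s} for every t, and let a : D → [0,∞) satisfy a(t,u) ≤ ε² t^{−(s+1)} for all (t,u) ∈ D. Then there is a constant C depending only on s, p, p₁ such that ∫∫_D r(t,u)^p F(t,u) a(t,u) dt du ≤ C · ε³ · u₁^{p−s}. -/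
open MeasureTheory Set ENNReal

lemma amgm' {A B c : ℝ} (hc : 0 < c) : A * B ≤ c/2 * A^2 + 1/(2*c) * B^2 := by
  rw [← sub_nonneg]
  have key : c/2 * A^2 + 1/(2*c) * B^2 - A * B = (c*A - B)^2 / (2*c) := by
    field_simp; ring
  rw [key]; positivity

/-- Flat model of the interior-region nonlinear error estimate
`𝒩_p¹[𝔽_{p₁}, 𝕆_ℓ·𝔼_{p₂}](ⁱᵢV)` near the symmetry axis.
On `D = {(t,u) : u₁ ≤ u ≤ u₂, u ≤ t ≤ 2u}` with `r = t−u`: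
if for every `t` the hypersurface flux satisfies
`∫_{{u : (t,u)∈D}} r^{p₁} F² du ≤ ε² u₁^{p₁−s}` and `a ≤ ε² t^{−(s+1)}` on `D`,
then `∫∫_D r^p F a dt du ≤ C ε³ u₁^{p−s}` with `C` depending only on `s, p, p₁`,
provided `p₁ ∈ [0,s]`, `p₁/2 ≤ p ≤ s` and `2p+1 < p₁+2s`. -/
theorem interior_error_estimate_FE (s p p₁ : ℝ) (hs1 : 1 < s) (hs2 : s ≤ 2)
    (hp₁0 : 0 ≤ p₁) (hp₁s : p₁ ≤ s) (hplow : p₁ / 2 ≤ p) (hps : p ≤ s)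
    (hlt : 2 * p + 1 < p₁ + 2 * s) :
    ∃ C : ℝ, 0 < C ∧
      ∀ (ε u₁ u₂ : ℝ), 0 ≤ ε → 1 ≤ u₁ → u₁ ≤ u₂ →
      ∀ F a : ℝ → ℝ → ℝ,
        Measurable (Function.uncurry F) →
        (∀ t u, u₁ ≤ u → u ≤ u₂ → u ≤ t → t ≤ 2 * u → 0 ≤ F t u) →
        (∀ t u, u₁ ≤ u → u ≤ u₂ → u ≤ t → t ≤ 2 * u → 0 ≤ a t u) →
        (∀ t u, u₁ ≤ u → u ≤ u₂ → u ≤ t → t ≤ 2 * u →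
          a t u ≤ ε ^ 2 * t ^ (-(s + 1))) →
        (∀ t : ℝ, ∫⁻ u in {u : ℝ | u₁ ≤ u ∧ u ≤ u₂ ∧ u ≤ t ∧ t ≤ 2 * u},
            ENNReal.ofReal ((t - u) ^ p₁ * F t u ^ 2)
          ≤ ENNReal.ofReal (ε ^ 2 * u₁ ^ (p₁ - s))) →
        ∫⁻ u in Set.Icc u₁ u₂, ∫⁻ t in Set.Icc u (2 * u),
            ENNReal.ofReal ((t - u) ^ p * F t u * a t u)
          ≤ ENNReal.ofReal (C * ε ^ 3 * u₁ ^ (p - s)) := by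
  set ρ : ℝ := p - p₁/2 - s - 1/2 with hρdef
  have hρ : ρ < -1 := by rw [hρdef]; linarith
  have hCpos : (0:ℝ) < -(ρ+1) := by linarith
  refine ⟨(-(ρ+1))⁻¹, by positivity, ?_⟩
  intro ε u₁ u₂ hε hu₁ hu₁₂ F a hFm hF0 ha0 habd hflux
  have hu₁pos : (0:ℝ) < u₁ := by linarith
  rcases eq_or_lt_of_le hε with hε0 | hε0
  · -- ε = 0 : a vanishes on D
    have hz : ∀ u ∈ Icc u₁ u₂, ∀ t ∈ Icc u (2*u),
        ENNReal.ofReal ((t - u) ^ p * F t u * a t u) ≤ 0 := by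
      intro u hu t ht
      have ha' := habd t u hu.1 hu.2 ht.1 ht.2
      have ha'' := ha0 t u hu.1 hu.2 ht.1 ht.2
      have hz0 : a t u = 0 := le_antisymm (by rw [← hε0] at ha'; simpa using ha') ha''
      simp [hz0]
    calc ∫⁻ u in Icc u₁ u₂, ∫⁻ t in Icc u (2*u),
            ENNReal.ofReal ((t - u) ^ p * F t u * a t u)
        ≤ ∫⁻ _ in Icc u₁ u₂, (0:ℝ≥0∞) := by
          refine setLIntegral_mono' measurableSet_Icc fun u hu => ?_
          calc ∫⁻ t in Icc u (2*u), ENNReal.ofReal ((t - u) ^ p * F t u * a t u)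
              ≤ ∫⁻ _ in Icc u (2*u), (0:ℝ≥0∞) :=
                setLIntegral_mono' measurableSet_Icc fun t ht => hz u hu t ht
            _ = 0 := by simp
      _ = 0 := by simp
      _ ≤ _ := zero_le
  · -- main case : ε > 0
    have hs0 : (0:ℝ) < s := by linarith
    set σ : ℝ := -(s+1) with hσdef
    set α : ℝ := 2*p - p₁ with hαdef
    have hα0 : 0 ≤ α := by rw [hαdef]; linarith
    set K : ℝ := ε^3 * u₁ ^ ((p₁-s)/2) with hKdef
    have hK0 : 0 ≤ K := by positivity
    set g : ℝ → ℝ → ℝ≥0∞ := fun t u =>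
      ENNReal.ofReal ((t - u) ^ p * F t u * (ε^2 * t ^ σ)) with hgdef
    set S : ℝ → Set ℝ := fun t => {u : ℝ | u₁ ≤ u ∧ u ≤ u₂ ∧ u ≤ t ∧ t ≤ 2*u} with hSdef
    have hSmeas : ∀ t, MeasurableSet (S t) := by
      intro t
      rw [hSdef]
      simp only [setOf_and]
      exact (measurableSet_le measurable_const measurable_id).inter
        ((measurableSet_le measurable_id measurable_const).inter
        ((measurableSet_le measurable_id measurable_const).inter
          (measurableSet_le measurable_const (measurable_id.const_mul 2))))
    set E : Set (ℝ × ℝ) := {z : ℝ×ℝ | u₁ ≤ z.1 ∧ z.1 ≤ u₂ ∧ z.1 ≤ z.2 ∧ z.2 ≤ 2*z.1}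
      with hEdef
    have hEmeas : MeasurableSet E := by
      rw [hEdef]
      simp only [setOf_and]
      exact (measurableSet_le measurable_const measurable_fst).inter
        ((measurableSet_le measurable_fst measurable_const).inter
        ((measurableSet_le measurable_fst measurable_snd).inter
          (measurableSet_le measurable_snd (measurable_fst.const_mul 2))))
    set G : ℝ × ℝ → ℝ≥0∞ := fun z => g z.2 z.1 with hGdef
    have hFsw : Measurable fun z : ℝ × ℝ => F z.2 z.1 := hFm.comp measurable_swap
    have hGmeas : Measurable G := by
      rw [hGdef, hgdef]
      fun_prop
    set f : ℝ → ℝ → ℝ≥0∞ := fun u t => E.indicator G (u, t) with hfdef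
    have hufm : Measurable (Function.uncurry f) := by
      have : Function.uncurry f = E.indicator G := rfl
      rw [this]
      exact hGmeas.indicator hEmeas
    -- Step 1 : replace a by its pointwise bound
    have step1 : ∫⁻ u in Icc u₁ u₂, ∫⁻ t in Icc u (2*u),
            ENNReal.ofReal ((t - u) ^ p * F t u * a t u)
        ≤ ∫⁻ u in Icc u₁ u₂, ∫⁻ t in Icc u (2*u), g t u := by
      refine setLIntegral_mono' measurableSet_Icc fun u hu => ?_
      refine setLIntegral_mono' measurableSet_Icc fun t ht => ?_
      refine ENNReal.ofReal_le_ofReal ?_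
      have h1 : 0 ≤ (t-u)^p * F t u :=
        mul_nonneg (Real.rpow_nonneg (by linarith [ht.1]) _)
          (hF0 t u hu.1 hu.2 ht.1 ht.2)
      exact mul_le_mul_of_nonneg_left (habd t u hu.1 hu.2 ht.1 ht.2) h1
    -- Step 2 : as a double integral with an indicator
    have step2 : ∫⁻ u in Icc u₁ u₂, ∫⁻ t in Icc u (2*u), g t u
        = ∫⁻ u, ∫⁻ t, f u t := by
      rw [← lintegral_indicator measurableSet_Icc]
      refine lintegral_congr fun u => ?_
      by_cases hu : u ∈ Icc u₁ u₂
      · rw [indicator_of_mem hu, ← lintegral_indicator measurableSet_Icc]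
        refine lintegral_congr fun t => ?_
        by_cases ht : t ∈ Icc u (2*u)
        · rw [indicator_of_mem ht]
          have hz : (u,t) ∈ E := ⟨hu.1, hu.2, ht.1, ht.2⟩
          exact (indicator_of_mem hz G).symm
        · rw [indicator_of_notMem ht]
          have hz : (u,t) ∉ E := fun h => ht ⟨h.2.2.1, h.2.2.2⟩
          exact (indicator_of_notMem hz G).symm
      · rw [indicator_of_notMem hu]
        have hzz : ∀ t, f u t = 0 := fun t =>
          indicator_of_notMem (fun h => hu ⟨h.1, h.2.1⟩) G
        simp only [hzz, lintegral_zero]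
    -- Step 3 : Tonelli
    have step3 : ∫⁻ u, ∫⁻ t, f u t = ∫⁻ t, ∫⁻ u, f u t :=
      lintegral_lintegral_swap hufm.aemeasurable
    -- Step 4 : key bound on the inner integral
    have key : ∀ t : ℝ, (∫⁻ u, f u t)
        ≤ (Ici u₁).indicator (fun t => ENNReal.ofReal (K * t ^ ρ)) t := by
      intro t
      by_cases htu : t ∈ Ici u₁
      swap
      · rw [indicator_of_notMem htu]
        have hzz : ∀ u, f u t = 0 := fun u =>
          indicator_of_notMem (fun h => htu (le_trans h.1 h.2.2.1)) G
        simp only [hzz, lintegral_zero, le_refl]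
      · rw [indicator_of_mem htu]
        have ht0 : 0 < t := lt_of_lt_of_le hu₁pos htu
        have hfi : ∀ u, f u t = (S t).indicator (fun u => g t u) u := by
          intro u
          by_cases hu : u ∈ S t
          · rw [indicator_of_mem hu]
            exact indicator_of_mem (show (u,t) ∈ E from hu) G
          · rw [indicator_of_notMem hu]
            have hnot : (u,t) ∉ E := fun h => hu ⟨h.1, h.2.1, h.2.2.1, h.2.2.2⟩
            exact indicator_of_notMem hnot G
        set c : ℝ := ε * u₁ ^ ((s-p₁)/2) * t ^ ρ with hcdef
        have hc : 0 < c := by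
          rw [hcdef]
          have := Real.rpow_pos_of_pos hu₁pos ((s-p₁)/2)
          have := Real.rpow_pos_of_pos ht0 ρ
          positivity
        have hptwise : ∀ u ∈ S t, g t u ≤
            ENNReal.ofReal (c/2 * ((t-u)^p₁ * F t u ^ 2))
            + ENNReal.ofReal (1/(2*c) * ((t-u)^α * (ε^2 * t^σ)^2)) := by
          intro u hu
          obtain ⟨h1, h2, h3, h4⟩ := hu
          have hr0 : (0:ℝ) ≤ t - u := sub_nonneg.2 h3
          have hF0' := hF0 t u h1 h2 h3 h4
          have htσ : (0:ℝ) ≤ ε^2 * t^σ := by positivity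
          rw [← ENNReal.ofReal_add (by positivity) (by positivity)]
          refine ENNReal.ofReal_le_ofReal ?_
          have hsplit : (t-u)^p = (t-u)^(p₁/2) * (t-u)^(p - p₁/2) := by
            rw [← Real.rpow_add_of_nonneg hr0 (by linarith) (by linarith)]
            congr 1; ring
          have hA : ((t-u)^(p₁/2))^2 = (t-u)^p₁ := by
            rw [← Real.rpow_natCast ((t-u)^(p₁/2)) 2, ← Real.rpow_mul hr0]
            norm_num
          have hB : ((t-u)^(p - p₁/2))^2 = (t-u)^α := by
            rw [← Real.rpow_natCast ((t-u)^(p - p₁/2)) 2, ← Real.rpow_mul hr0]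
            rw [hαdef]; congr 1; ring
          calc (t-u)^p * F t u * (ε^2 * t^σ)
              = ((t-u)^(p₁/2) * F t u) * ((t-u)^(p - p₁/2) * (ε^2 * t^σ)) := by
                rw [hsplit]; ring
            _ ≤ c/2 * ((t-u)^(p₁/2) * F t u)^2
                + 1/(2*c) * ((t-u)^(p - p₁/2) * (ε^2 * t^σ))^2 := amgm' hc
            _ = c/2 * ((t-u)^p₁ * F t u ^ 2)
                + 1/(2*c) * ((t-u)^α * (ε^2 * t^σ)^2) := by
                rw [mul_pow, mul_pow, hA, hB]
        have hFt : Measurable (F t) := hFm.comp measurable_prodMk_left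
        have h1meas : Measurable fun u =>
            ENNReal.ofReal (c/2 * ((t-u)^p₁ * F t u ^ 2)) := by fun_prop
        -- term 1
        have term1 : (∫⁻ u in S t, ENNReal.ofReal (c/2 * ((t-u)^p₁ * F t u ^ 2)))
            ≤ ENNReal.ofReal (c/2 * (ε^2 * u₁^(p₁-s))) := by
          have hrw : ∀ u : ℝ, ENNReal.ofReal (c/2 * ((t-u)^p₁ * F t u ^ 2))
              = ENNReal.ofReal (c/2) * ENNReal.ofReal ((t-u)^p₁ * F t u ^ 2) :=
            fun u => ENNReal.ofReal_mul (by positivity)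
          simp only [hrw]
          rw [lintegral_const_mul' _ _ ENNReal.ofReal_ne_top]
          rw [ENNReal.ofReal_mul (by positivity)]
          exact mul_le_mul_right (hflux t) _
        -- term 2
        have term2 : (∫⁻ u in S t, ENNReal.ofReal (1/(2*c) * ((t-u)^α * (ε^2 * t^σ)^2)))
            ≤ ENNReal.ofReal (1/(2*c) * (ε^2 * t^σ)^2 * (t^α * (t/2))) := by
          have hrw : ∀ u : ℝ, ENNReal.ofReal (1/(2*c) * ((t-u)^α * (ε^2 * t^σ)^2))
              = ENNReal.ofReal (1/(2*c) * (ε^2 * t^σ)^2) * ENNReal.ofReal ((t-u)^α) := by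
            intro u
            rw [← ENNReal.ofReal_mul (by positivity)]
            congr 1; ring
          simp only [hrw]
          rw [lintegral_const_mul' _ _ ENNReal.ofReal_ne_top]
          have hfin : ENNReal.ofReal (1/(2*c) * (ε^2 * t^σ)^2)
              * ENNReal.ofReal (t^α * (t/2))
              = ENNReal.ofReal (1/(2*c) * (ε^2 * t^σ)^2 * (t^α * (t/2))) :=
            (ENNReal.ofReal_mul (by positivity)).symm
          rw [← hfin]
          refine mul_le_mul_right ?_ _
          calc (∫⁻ u in S t, ENNReal.ofReal ((t-u)^α))
              ≤ ∫⁻ _ in S t, ENNReal.ofReal (t^α) := by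
                refine setLIntegral_mono' (hSmeas t) fun u hu => ?_
                obtain ⟨h1, h2, h3, h4⟩ := hu
                exact ENNReal.ofReal_le_ofReal
                  (Real.rpow_le_rpow (by linarith) (by linarith) hα0)
            _ = ENNReal.ofReal (t^α) * volume (S t) := setLIntegral_const _ _
            _ ≤ ENNReal.ofReal (t^α) * volume (Icc (t/2) t) := by
                refine mul_le_mul_right (measure_mono fun u hu => ?_) _
                obtain ⟨h1, h2, h3, h4⟩ := hu
                exact ⟨by linarith, h3⟩
            _ = ENNReal.ofReal (t^α) * ENNReal.ofReal (t/2) := by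
                rw [Real.volume_Icc]; congr 1; ring_nf
            _ = ENNReal.ofReal (t^α * (t/2)) :=
                (ENNReal.ofReal_mul (by positivity)).symm
        -- scalar computation
        have e1 : c * (ε^2 * u₁^(p₁-s)) = K * t^ρ := by
          have hu : u₁^((s-p₁)/2) * u₁^(p₁-s) = u₁^((p₁-s)/2) := by
            rw [← Real.rpow_add hu₁pos]; congr 1; ring
          rw [hcdef, hKdef]
          calc ε * u₁^((s-p₁)/2) * t^ρ * (ε^2 * u₁^(p₁-s))
              = (ε * ε^2) * (u₁^((s-p₁)/2) * u₁^(p₁-s)) * t^ρ := by ring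
            _ = ε^3 * u₁^((p₁-s)/2) * t^ρ := by rw [hu]; ring
        have e2 : (ε^2 * t^σ)^2 * (t^α * (t/2)) ≤ c * (K * t^ρ) := by
          have l1 : (ε^2 * t^σ)^2 * (t^α * (t/2))
              = ε^4 * t^(σ + σ + (α+1)) * (1/2) := by
            rw [Real.rpow_add ht0 (σ+σ), Real.rpow_add ht0 σ σ,
              Real.rpow_add_one ht0.ne' α]
            ring
          have l2 : c * (K * t^ρ) = ε^4 * t^(ρ + ρ) := by
            have hu : u₁^((s-p₁)/2) * u₁^((p₁-s)/2) = 1 := by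
              rw [← Real.rpow_add hu₁pos,
                show (s-p₁)/2 + (p₁-s)/2 = 0 from by ring, Real.rpow_zero]
            rw [hcdef, hKdef, Real.rpow_add ht0]
            calc ε * u₁^((s-p₁)/2) * t^ρ * (ε^3 * u₁^((p₁-s)/2) * t^ρ)
                = (ε * ε^3) * (u₁^((s-p₁)/2) * u₁^((p₁-s)/2)) * (t^ρ * t^ρ) := by ring
              _ = ε^4 * (t^ρ * t^ρ) := by rw [hu]; ring
          have hexp : σ + σ + (α+1) = ρ + ρ := by
            rw [hσdef, hαdef, hρdef]; ring
          rw [l1, l2, hexp]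
          have hX : 0 ≤ ε^4 * t^(ρ+ρ) := by positivity
          linarith
        have scal : c/2 * (ε^2 * u₁^(p₁-s)) + 1/(2*c) * (ε^2 * t^σ)^2 * (t^α * (t/2))
            ≤ K * t^ρ := by
          have h1 : c/2 * (ε^2 * u₁^(p₁-s)) = K * t^ρ / 2 := by
            rw [← e1]; ring
          have h2 : 1/(2*c) * (ε^2 * t^σ)^2 * (t^α * (t/2)) ≤ K * t^ρ / 2 := by
            have := mul_le_mul_of_nonneg_left e2 (le_of_lt (by positivity : (0:ℝ) < 1/(2*c)))
            calc 1/(2*c) * (ε^2 * t^σ)^2 * (t^α * (t/2))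
                = 1/(2*c) * ((ε^2 * t^σ)^2 * (t^α * (t/2))) := by ring
              _ ≤ 1/(2*c) * (c * (K * t^ρ)) := this
              _ = K * t^ρ / 2 := by field_simp
          linarith
        -- assemble
        calc (∫⁻ u, f u t) = ∫⁻ u in S t, g t u := by
              simp only [hfi]
              exact lintegral_indicator (hSmeas t) _
          _ ≤ ∫⁻ u in S t, (ENNReal.ofReal (c/2 * ((t-u)^p₁ * F t u ^ 2))
              + ENNReal.ofReal (1/(2*c) * ((t-u)^α * (ε^2 * t^σ)^2))) :=
              setLIntegral_mono' (hSmeas t) hptwise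
          _ = (∫⁻ u in S t, ENNReal.ofReal (c/2 * ((t-u)^p₁ * F t u ^ 2)))
              + ∫⁻ u in S t, ENNReal.ofReal (1/(2*c) * ((t-u)^α * (ε^2 * t^σ)^2)) :=
              lintegral_add_left h1meas _
          _ ≤ ENNReal.ofReal (c/2 * (ε^2 * u₁^(p₁-s)))
              + ENNReal.ofReal (1/(2*c) * (ε^2 * t^σ)^2 * (t^α * (t/2))) :=
              add_le_add term1 term2
          _ ≤ ENNReal.ofReal (K * t^ρ) := by
              rw [← ENNReal.ofReal_add (by positivity) (by positivity)]
              exact ENNReal.ofReal_le_ofReal scal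
    -- Step 5 : outer integral
    have hint : IntegrableOn (fun t : ℝ => K * t^ρ) (Ioi u₁) :=
      (integrableOn_Ioi_rpow_of_lt hρ hu₁pos).const_mul K
    have step5 : (∫⁻ t, (Ici u₁).indicator (fun t => ENNReal.ofReal (K * t ^ ρ)) t)
        = ENNReal.ofReal (K * (-u₁^(ρ+1) / (ρ+1))) := by
      rw [lintegral_indicator measurableSet_Ici,
        setLIntegral_congr (Ioi_ae_eq_Ici (a := u₁)).symm,
        ← ofReal_integral_eq_lintegral_ofReal hint]
      · rw [integral_const_mul, integral_Ioi_rpow_of_lt hρ hu₁pos]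
      · refine (ae_restrict_iff' measurableSet_Ioi).2 (ae_of_all _ fun t ht => ?_)
        have ht0 : (0:ℝ) < t := lt_trans hu₁pos ht
        positivity
    -- final scalar bound
    have final : K * (-u₁^(ρ+1) / (ρ+1)) ≤ (-(ρ+1))⁻¹ * ε^3 * u₁^(p-s) := by
      have hne : ρ + 1 ≠ 0 := by linarith
      have hne' : -(ρ+1) ≠ 0 := by linarith
      have hr1 : -u₁^(ρ+1) / (ρ+1) = u₁^(ρ+1) * (-(ρ+1))⁻¹ := by
        rw [neg_div, ← div_neg, div_eq_mul_inv]
      rw [hr1, hKdef]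
      have hu : u₁^((p₁-s)/2) * u₁^(ρ+1) = u₁^((p₁-s)/2 + (ρ+1)) :=
        (Real.rpow_add hu₁pos _ _).symm
      have hle : u₁^((p₁-s)/2 + (ρ+1)) ≤ u₁^(p-s) := by
        refine Real.rpow_le_rpow_of_exponent_le hu₁ ?_
        rw [hρdef]; linarith
      calc ε^3 * u₁^((p₁-s)/2) * (u₁^(ρ+1) * (-(ρ+1))⁻¹)
          = (ε^3 * (-(ρ+1))⁻¹) * (u₁^((p₁-s)/2) * u₁^(ρ+1)) := by ring
        _ = (ε^3 * (-(ρ+1))⁻¹) * u₁^((p₁-s)/2 + (ρ+1)) := by rw [hu]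
        _ ≤ (ε^3 * (-(ρ+1))⁻¹) * u₁^(p-s) := by
            refine mul_le_mul_of_nonneg_left hle (by positivity)
        _ = (-(ρ+1))⁻¹ * ε^3 * u₁^(p-s) := by ring
    calc ∫⁻ u in Icc u₁ u₂, ∫⁻ t in Icc u (2*u),
            ENNReal.ofReal ((t - u) ^ p * F t u * a t u)
        ≤ ∫⁻ u in Icc u₁ u₂, ∫⁻ t in Icc u (2*u), g t u := step1
      _ = ∫⁻ u, ∫⁻ t, f u t := step2
      _ = ∫⁻ t, ∫⁻ u, f u t := step3
      _ ≤ ∫⁻ t, (Ici u₁).indicator (fun t => ENNReal.ofReal (K * t ^ ρ)) t :=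
          lintegral_mono key
      _ = ENNReal.ofReal (K * (-u₁^(ρ+1) / (ρ+1))) := step5
      _ ≤ ENNReal.ofReal ((-(ρ+1))⁻¹ * ε^3 * u₁^(p-s)) :=
          ENNReal.ofReal_le_ofReal final
end
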